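/- arXiv:1102.4022 — 5 statements merged into one kernel-verified Lean document; each statement's English description precedes it below -/
import Mathlib

section
/- Let F ∈ C²([-1,1]) be a balanced double-well potential (F(±1)=0, F'(±1)=0, F''(±1)>0, F'(t)>0 on (-1,0), F'(t)<0 on (0,1)). If g : ℝ → ℝ solves g'' = F'(g), |g| ≤ 1, with g(s) → ±1 as s → ±∞, then g satisfies the first integral identity (1/2)(g'(s))² = F(g(s)) for all s ∈ ℝ. -/
open Real

/-- First integral identity for the 1-D heteroclinic of the Allen–Cahn equation. -/
theorem stmt_0
    (F g : ℝ → ℝ)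
    (hF : ContDiffOn ℝ 2 F (Set.Icc (-1) 1))
    (hF1 : F 1 = 0) (hFm1 : F (-1) = 0)
    (hF'1 : deriv F 1 = 0) (hF'm1 : deriv F (-1) = 0)
    (hF''1 : 0 < deriv (deriv F) 1) (hF''m1 : 0 < deriv (deriv F) (-1))
    (hFpos : ∀ t ∈ Set.Ioo (-1 : ℝ) 0, 0 < deriv F t)
    (hFneg : ∀ t ∈ Set.Ioo (0 : ℝ) 1, deriv F t < 0)
    (hg : ContDiff ℝ 2 g)
    (hode : ∀ s : ℝ, deriv (deriv g) s = deriv F (g s))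
    (hgb : ∀ s : ℝ, |g s| ≤ 1)
    (hgtop : Filter.Tendsto g Filter.atTop (nhds 1))
    (hgbot : Filter.Tendsto g Filter.atBot (nhds (-1))) :
    ∀ s : ℝ, (1 / 2) * (deriv g s) ^ 2 = F (g s) := by
  have hmem : ∀ s, g s ∈ Set.Icc (-1 : ℝ) 1 := by
    intro s
    rcases abs_le.mp (hgb s) with ⟨h1, h2⟩
    exact ⟨h1, h2⟩
  have hgd : Differentiable ℝ g := hg.differentiable two_ne_zero
  have hg1 : ContDiff ℝ 1 (deriv g) := by
    have h2 : ContDiff ℝ (1 + 1) g := by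
      rw [show ((1 : WithTop ℕ∞) + 1) = 2 by norm_num]
      exact hg
    exact (contDiff_succ_iff_deriv.mp h2).2.2
  have hg'd : Differentiable ℝ (deriv g) := hg1.differentiable one_ne_zero
  have hg'c : Continuous (deriv g) := hg'd.continuous
  have hg' : ∀ s, HasDerivAt g (deriv g s) s := fun s => (hgd s).hasDerivAt
  have hg'' : ∀ s, HasDerivAt (deriv g) (deriv (deriv g) s) s := fun s => (hg'd s).hasDerivAt
  have Fdiff : DifferentiableOn ℝ F (Set.Icc (-1) 1) := hF.differentiableOn two_ne_zero
  set dW : ℝ → ℝ := derivWithin F (Set.Icc (-1) 1) with hdW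
  -- derivative of F ∘ g
  have hFg : ∀ s, HasDerivAt (fun t => F (g t)) (deriv g s * dW (g s)) s := by
    intro s
    have h1 : HasDerivWithinAt F (dW (g s)) (Set.Icc (-1) 1) (g s) :=
      (Fdiff (g s) (hmem s)).hasDerivWithinAt
    have := h1.scomp_hasDerivAt s (hg' s) hmem
    exact this
  -- the energy
  set E : ℝ → ℝ := fun s => (1 / 2) * (deriv g s) ^ 2 - F (g s) with hEdef
  have hE : ∀ s, HasDerivAt E 0 s := by
    intro s
    have h1 : HasDerivAt (fun t => (1 / 2 : ℝ) * (deriv g t) ^ 2)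
        (deriv g s * deriv (deriv g) s) s := by
      have := ((hg'' s).pow 2).const_mul (1 / 2 : ℝ)
      refine this.congr_deriv ?_
      rw [show (2:ℕ) - 1 = 1 from rfl]
      push_cast
      ring
    have h2 := h1.sub (hFg s)
    have hkey : deriv g s * deriv (deriv g) s - deriv g s * dW (g s) = 0 := by
      rw [hode s]
      rcases eq_or_lt_of_le (hmem s).2 with htop | htop
      · -- g s = 1 : local max, deriv g s = 0
        have hmax : IsLocalMax g s := by
          refine Filter.Eventually.of_forall (fun t => ?_)
          rw [htop]; exact (hmem t).2
        rw [hmax.deriv_eq_zero]; ring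
      · rcases eq_or_lt_of_le (hmem s).1 with hbot | hbot
        · have hmin : IsLocalMin g s := by
            refine Filter.Eventually.of_forall (fun t => ?_)
            rw [← hbot]; exact (hmem t).1
          rw [hmin.deriv_eq_zero]; ring
        · have : dW (g s) = deriv F (g s) := by
            rw [hdW]
            exact derivWithin_of_mem_nhds (Icc_mem_nhds hbot htop)
          rw [this]; ring
    rw [← hkey]
    exact h2
  have hEdiff : Differentiable ℝ E := fun s => (hE s).differentiableAt
  have hconst : ∀ s, E s = E 0 := fun s =>
    is_const_of_deriv_eq_zero hEdiff (fun t => (hE t).deriv) s 0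
  obtain ⟨C, hCc⟩ : ∃ C : ℝ, ∀ s, E s = C := ⟨E 0, hconst⟩
  have heq : ∀ s, (deriv g s) ^ 2 = 2 * C + 2 * F (g s) := by
    intro s
    have h := hCc s
    simp only [hEdef] at h
    linarith
  -- F (g s) → 0 at +∞
  have hFg_top : Filter.Tendsto (fun s => F (g s)) Filter.atTop (nhds 0) := by
    have hFc : ContinuousWithinAt F (Set.Icc (-1) 1) 1 :=
      hF.continuousOn 1 ⟨by norm_num, le_refl 1⟩
    have hg_to : Filter.Tendsto g Filter.atTop (nhdsWithin 1 (Set.Icc (-1) 1)) :=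
      tendsto_nhdsWithin_iff.mpr ⟨hgtop, Filter.Eventually.of_forall hmem⟩
    have := hFc.tendsto.comp hg_to
    rwa [hF1] at this
  have hsq : Filter.Tendsto (fun s => (deriv g s) ^ 2) Filter.atTop (nhds (2 * C)) := by
    have h1 : Filter.Tendsto (fun s => 2 * C + 2 * F (g s)) Filter.atTop
        (nhds (2 * C + 2 * 0)) := Filter.Tendsto.add tendsto_const_nhds (hFg_top.const_mul 2)
    have h2 : (2 * C + 2 * 0 : ℝ) = 2 * C := by ring
    rw [h2] at h1
    exact h1.congr (fun s => (heq s).symm)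
  have hCnonneg : (0 : ℝ) ≤ 2 * C := ge_of_tendsto' hsq (fun s => sq_nonneg _)
  have hC0 : C = 0 := by
    rcases eq_or_lt_of_le hCnonneg with h | h
    · linarith
    · -- 0 < 2C : contradiction
      exfalso
      have hCpos : 0 < C := by linarith
      have hδpos : 0 < Real.sqrt C := Real.sqrt_pos.mpr hCpos
      have hev : ∀ᶠ s in Filter.atTop, C < (deriv g s) ^ 2 :=
        hsq.eventually (eventually_gt_nhds (by linarith))
      rcases Filter.eventually_atTop.mp hev with ⟨a, ha⟩
      have habs : ∀ s, a ≤ s → Real.sqrt C ≤ |deriv g s| := by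
        intro s hs
        have h1 : Real.sqrt C ≤ Real.sqrt ((deriv g s) ^ 2) :=
          Real.sqrt_le_sqrt (le_of_lt (ha s hs))
        rwa [Real.sqrt_sq_eq_abs] at h1
      have hne : ∀ s, a ≤ s → deriv g s ≠ 0 := by
        intro s hs h0
        have := habs s hs
        rw [h0, abs_zero] at this
        linarith
      have h3pos : 0 < 3 / Real.sqrt C := by positivity
      have hab : a ≤ a + 3 / Real.sqrt C := by linarith
      have hexp : Real.sqrt C * (a + 3 / Real.sqrt C) = Real.sqrt C * a + 3 := by
        field_simp
      rcases (hne a le_rfl).lt_or_gt with hnega | hposa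
      · -- deriv g a < 0, so deriv g s ≤ -√C for all s ≥ a
        have hup : ∀ s, a ≤ s → deriv g s ≤ -Real.sqrt C := by
          intro s hs
          rcases le_abs.mp (habs s hs) with h1 | h1
          · exfalso
            have hcont : ContinuousOn (deriv g) (Set.Icc a s) := hg'c.continuousOn
            have h0mem : (0 : ℝ) ∈ Set.Icc (deriv g a) (deriv g s) :=
              ⟨le_of_lt hnega, by linarith⟩
            rcases intermediate_value_Icc hs hcont h0mem with ⟨c, hc, hc0⟩
            exact hne c hc.1 hc0
          · linarith
        have haux : MonotoneOn (fun t => -(g t) - Real.sqrt C * t) (Set.Ici a) := by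
          refine monotoneOn_of_deriv_nonneg (convex_Ici a) ?_ ?_ ?_
          · exact ((hgd.neg).sub (differentiable_id.const_mul _)).continuous.continuousOn
          · exact ((hgd.neg).sub (differentiable_id.const_mul _)).differentiableOn
          · intro x hx
            rw [interior_Ici] at hx
            have hd : HasDerivAt (fun t => -(g t) - Real.sqrt C * t)
                (-(deriv g x) - Real.sqrt C) x := by
              have := ((hg' x).neg).sub ((hasDerivAt_id x).const_mul (Real.sqrt C))
              convert this using 1 <;> first | rfl | ring
            rw [hd.deriv]
            have := hup x (le_of_lt hx)
            linarith
        have hmle := haux Set.self_mem_Ici (Set.mem_Ici.mpr hab) hab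
        simp only at hmle
        have h1 : -1 ≤ g (a + 3 / Real.sqrt C) := (hmem _).1
        have h2 : g a ≤ 1 := (hmem a).2
        linarith
      · -- deriv g a > 0, so deriv g s ≥ √C for all s ≥ a
        have hup : ∀ s, a ≤ s → Real.sqrt C ≤ deriv g s := by
          intro s hs
          rcases le_abs.mp (habs s hs) with h1 | h1
          · exact h1
          · exfalso
            have hcont : ContinuousOn (deriv g) (Set.Icc a s) := hg'c.continuousOn
            have h0mem : (0 : ℝ) ∈ Set.Icc (deriv g s) (deriv g a) :=
              ⟨by linarith, le_of_lt hposa⟩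
            rcases intermediate_value_Icc' hs hcont h0mem with ⟨c, hc, hc0⟩
            exact hne c hc.1 hc0
        have haux : MonotoneOn (fun t => g t - Real.sqrt C * t) (Set.Ici a) := by
          refine monotoneOn_of_deriv_nonneg (convex_Ici a) ?_ ?_ ?_
          · exact (hgd.sub (differentiable_id.const_mul _)).continuous.continuousOn
          · exact (hgd.sub (differentiable_id.const_mul _)).differentiableOn
          · intro x hx
            rw [interior_Ici] at hx
            have hd : HasDerivAt (fun t => g t - Real.sqrt C * t)
                (deriv g x - Real.sqrt C) x := by
              have := (hg' x).sub ((hasDerivAt_id x).const_mul (Real.sqrt C))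
              convert this using 1 <;> first | rfl | ring
            rw [hd.deriv]
            have := hup x (le_of_lt hx)
            linarith
        have hmle := haux Set.self_mem_Ici (Set.mem_Ici.mpr hab) hab
        simp only at hmle
        have h1 : g (a + 3 / Real.sqrt C) ≤ 1 := (hmem _).2
        have h2 : -1 ≤ g a := (hmem a).1
        linarith
  intro s
  have h := hCc s
  rw [hC0] at h
  simp only [hEdef] at h
  linarith
end

section
/- Suppose u : ℝ₊ × ℝ → ℝ solves u_xx + u_yy = F'(u) with |u| < 1, u_x(0,y) = 0, u_x(x,y) > 0 for x > 0, and u and its derivatives decay so that h(y) := ∫_0^∞ u_y u_x dx is well-defined. Then |h(y)| ≤ β − G(u(0,y)) < β for every y, where G(t) = ∫_{-1}^{t} √(2F(s)) ds and β = G(1). -/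
open Real MeasureTheory Set

/-- If `F` is `C²` on `[-1,1]`, nonnegative, and vanishes at an interior point `c`,
then `F` is bounded by a quadratic `M (s-c)²` on `[c,1]`. -/
lemma aux_quad (F : ℝ → ℝ) (hF : ContDiffOn ℝ 2 F (Set.Icc (-1) 1))
    (hFnonneg : ∀ s ∈ Set.Icc (-1:ℝ) 1, 0 ≤ F s) (c : ℝ) (hc : c ∈ Set.Ioo (-1:ℝ) 1)
    (hFc : F c = 0) : ∃ M : ℝ, 0 ≤ M ∧ ∀ s ∈ Set.Icc c 1, F s ≤ M * (s - c)^2 := by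
  have hI : UniqueDiffOn ℝ (Set.Icc (-1:ℝ) 1) := uniqueDiffOn_Icc (by norm_num)
  set F₁ := derivWithin F (Set.Icc (-1:ℝ) 1) with hF₁def
  have hF₁ : ContDiffOn ℝ 1 F₁ (Set.Icc (-1:ℝ) 1) := hF.derivWithin hI (by norm_num)
  have hcI : c ∈ Set.Icc (-1:ℝ) 1 := ⟨hc.1.le, hc.2.le⟩
  have hmem : Set.Icc (-1:ℝ) 1 ∈ nhds c := Icc_mem_nhds hc.1 hc.2
  -- bound the second derivative
  have hF₂cont : ContinuousOn (derivWithin F₁ (Set.Icc (-1:ℝ) 1)) (Set.Icc (-1:ℝ) 1) :=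
    (hF₁.derivWithin (m := 0) hI (by norm_num)).continuousOn
  obtain ⟨M, hM⟩ := isCompact_Icc.exists_bound_of_continuousOn hF₂cont
  have hMnn : 0 ≤ M := le_trans (norm_nonneg _) (hM c hcI)
  -- F₁ c = 0
  have hF₁diff : DifferentiableOn ℝ F₁ (Set.Icc (-1:ℝ) 1) := hF₁.differentiableOn one_ne_zero
  have hFdiff : DifferentiableOn ℝ F (Set.Icc (-1:ℝ) 1) := hF.differentiableOn (by norm_num)
  have hmin : IsLocalMin F c := by
    filter_upwards [hmem] with s hs
    rw [hFc]; exact hFnonneg s hs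
  have hF₁c : F₁ c = 0 := by
    rw [hF₁def, derivWithin_of_mem_nhds hmem]
    exact hmin.deriv_eq_zero
  -- |F₁ s| ≤ M (s - c) on [c,1]
  have hlip : ∀ s ∈ Set.Icc c 1, |F₁ s| ≤ M * (s - c) := by
    intro s hs
    have hsI : s ∈ Set.Icc (-1:ℝ) 1 := ⟨le_trans hc.1.le hs.1, hs.2⟩
    have := Convex.norm_image_sub_le_of_norm_derivWithin_le hF₁diff
      (fun x hx => hM x hx) (convex_Icc _ _) hcI hsI
    rw [hF₁c, sub_zero] at this
    simpa [abs_of_nonneg (sub_nonneg.mpr hs.1)] using this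
  refine ⟨M/2, by positivity, ?_⟩
  -- monotone auxiliary function
  have hc1 : c < 1 := hc.2
  have hq : MonotoneOn (fun s => M/2 * (s - c)^2 - F s) (Set.Icc c 1) := by
    apply monotoneOn_of_deriv_nonneg (convex_Icc c 1)
    · exact ((continuous_const.mul ((continuous_id.sub continuous_const).pow 2)).continuousOn).sub
        (hF.continuousOn.mono (Set.Icc_subset_Icc hc.1.le le_rfl))
    · rw [interior_Icc]
      intro x hx
      have hxI : Set.Icc (-1:ℝ) 1 ∈ nhds x :=
        Icc_mem_nhds (lt_trans hc.1 hx.1) hx.2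
      have hdFx : DifferentiableAt ℝ F x :=
        (hFdiff x ⟨(lt_trans hc.1 hx.1).le, hx.2.le⟩).differentiableAt hxI
      exact (((differentiable_const _).mul ((differentiable_id.sub_const c).pow 2)) x).sub hdFx
        |>.differentiableWithinAt
    · rw [interior_Icc]
      intro x hx
      have hxI : Set.Icc (-1:ℝ) 1 ∈ nhds x :=
        Icc_mem_nhds (lt_trans hc.1 hx.1) hx.2
      have hdFx : DifferentiableAt ℝ F x :=
        (hFdiff x ⟨(lt_trans hc.1 hx.1).le, hx.2.le⟩).differentiableAt hxI
      have h1 : HasDerivAt (fun s => M/2 * (s - c)^2 - F s)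
          (M/2 * (2 * (x - c)) - deriv F x) x := by
        have := (((hasDerivAt_id x).sub_const c).pow 2).const_mul (M/2)
        have h2 := this.sub hdFx.hasDerivAt
        simp at h2
        exact h2
      rw [h1.deriv]
      have hdx : deriv F x = F₁ x := (derivWithin_of_mem_nhds hxI).symm
      have hFx : |F₁ x| ≤ M * (x - c) := hlip x ⟨hx.1.le, hx.2.le⟩
      have : deriv F x ≤ M * (x - c) := by
        rw [hdx]; exact le_trans (le_abs_self _) hFx
      nlinarith
  intro s hs
  have := hq ⟨le_rfl, hc1.le⟩ hs hs.1
  simp only [sub_self, ne_eq, OfNat.ofNat_ne_zero, not_false_eq_true, zero_pow, mul_zero,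
    hFc, sub_zero] at this
  linarith [this]


/-- Bound on `h(y) = ∫_0^∞ u_y u_x dx` by `β - G(u(0,y)) < β`. -/
theorem stmt_4
    (F : ℝ → ℝ) (u : ℝ → ℝ → ℝ)
    (hF : ContDiffOn ℝ 2 F (Set.Icc (-1) 1))
    (hFnonneg : ∀ s ∈ Set.Icc (-1 : ℝ) 1, 0 ≤ F s)
    (hu : ContDiff ℝ 3 (fun p : ℝ × ℝ => u p.1 p.2))
    (hub : ∀ x y : ℝ, 0 ≤ x → |u x y| < 1)
    (hpde : ∀ x y : ℝ, 0 ≤ x →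
      deriv (deriv (fun t => u t y)) x + deriv (deriv (u x)) y = deriv F (u x y))
    (hneumann : ∀ y : ℝ, deriv (fun t => u t y) 0 = 0)
    (hmono : ∀ x y : ℝ, 0 < x → 0 < deriv (fun t => u t y) x)
    (hmodica : ∀ x y : ℝ, 0 ≤ x →
      (deriv (fun t => u t y) x) ^ 2 + (deriv (u x) y) ^ 2 ≤ 2 * F (u x y))
    (hint : ∀ y : ℝ, IntegrableOn
      (fun x => (deriv (u x) y) * (deriv (fun t => u t y) x)) (Set.Ioi (0 : ℝ)))
    (G : ℝ → ℝ)
    (hG : ∀ t : ℝ, G t = ∫ s in (-1 : ℝ)..t, Real.sqrt (2 * F s))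
    (β : ℝ) (hβ : β = G 1)
    (h : ℝ → ℝ)
    (hh : ∀ y : ℝ, h y = ∫ x in Set.Ioi (0 : ℝ),
      (deriv (u x) y) * (deriv (fun t => u t y) x)) :
    ∀ y : ℝ, |h y| ≤ β - G (u 0 y) ∧ β - G (u 0 y) < β := by
  -- basic facts about the horizontal sections
  have hxline : ∀ y : ℝ, ContDiff ℝ 3 (fun t => u t y) :=
    fun y => hu.comp (contDiff_id.prodMk contDiff_const)
  have hdiffx : ∀ y : ℝ, Differentiable ℝ (fun t => u t y) :=
    fun y => (hxline y).differentiable (by norm_num)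
  have hcontd : ∀ y : ℝ, Continuous (fun x => deriv (fun t => u t y) x) := by
    intro y
    have h2 : ContDiff ℝ (2+1) (fun t => u t y) := by
      exact_mod_cast (hxline y)
    exact ((contDiff_succ_iff_deriv.mp h2).2.2.continuous)
  have huIcc : ∀ x y : ℝ, 0 ≤ x → u x y ∈ Set.Icc (-1:ℝ) 1 := by
    intro x y hx
    have := abs_lt.mp (hub x y hx)
    exact ⟨this.1.le, this.2.le⟩
  have husm : ∀ y : ℝ, ∀ a b : ℝ, 0 ≤ a → a < b → u a y < u b y := by
    intro y a b ha hab
    have hsm : StrictMonoOn (fun t => u t y) (Set.Icc a b) := by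
      apply strictMonoOn_of_deriv_pos (convex_Icc a b) (hxline y).continuous.continuousOn
      intro x hx
      rw [interior_Icc] at hx
      exact hmono x y (lt_of_le_of_lt ha hx.1)
    exact hsm ⟨le_rfl, hab.le⟩ ⟨hab.le, le_rfl⟩ hab
  -- continuity of √(2F)
  have hsqF_cont : ContinuousOn (fun s => Real.sqrt (2 * F s)) (Set.Icc (-1:ℝ) 1) :=
    Real.continuous_sqrt.comp_continuousOn (continuousOn_const.mul hF.continuousOn)
  have hii : ∀ a b : ℝ, a ∈ Set.Icc (-1:ℝ) 1 → b ∈ Set.Icc (-1:ℝ) 1 →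
      IntervalIntegrable (fun s => Real.sqrt (2 * F s)) volume a b := by
    intro a b ha hb
    exact (hsqF_cont.mono (Set.uIcc_subset_Icc ha hb)).intervalIntegrable
  have hm1 : (-1:ℝ) ∈ Set.Icc (-1:ℝ) 1 := by norm_num
  have h1I : (1:ℝ) ∈ Set.Icc (-1:ℝ) 1 := by norm_num
  have hGsub : ∀ a b : ℝ, a ∈ Set.Icc (-1:ℝ) 1 → b ∈ Set.Icc (-1:ℝ) 1 →
      G b - G a = ∫ s in a..b, Real.sqrt (2 * F s) := by
    intro a b ha hb
    rw [hG, hG]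
    exact intervalIntegral.integral_interval_sub_left (hii (-1) b hm1 hb) (hii (-1) a hm1 ha)
  have hGmono : ∀ a b : ℝ, a ≤ b → a ∈ Set.Icc (-1:ℝ) 1 → b ∈ Set.Icc (-1:ℝ) 1 →
      G a ≤ G b := by
    intro a b hab ha hb
    have h0 : 0 ≤ ∫ s in a..b, Real.sqrt (2 * F s) :=
      intervalIntegral.integral_nonneg hab (fun s _ => Real.sqrt_nonneg _)
    have := hGsub a b ha hb
    linarith
  -- positivity: F c > 0 at interior point implies G c > 0
  have hGpos_of_Fpos : ∀ c : ℝ, c ∈ Set.Ioo (-1:ℝ) 1 → 0 < F c → 0 < G c := by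
    intro c hc hFcpos
    have hcI : c ∈ Set.Icc (-1:ℝ) 1 := ⟨hc.1.le, hc.2.le⟩
    have hmem : Set.Icc (-1:ℝ) 1 ∈ nhds c := Icc_mem_nhds hc.1 hc.2
    have hcontat : ContinuousAt F c := (hF.continuousOn c hcI).continuousAt hmem
    have hev : F ⁻¹' {s | F c / 2 < s} ∈ nhds c :=
      hcontat (lt_mem_nhds (half_lt_self hFcpos))
    obtain ⟨δ, hδpos, hδ⟩ := Metric.mem_nhds_iff.mp hev
    set a : ℝ := c - min (δ/2) ((c+1)/2) with ha_def
    have hmin_pos : 0 < min (δ/2) ((c+1)/2) := lt_min (by linarith) (by linarith [hc.1])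
    have hac : a < c := by rw [ha_def]; linarith
    have ham1 : -1 ≤ a := by
      have : min (δ/2) ((c+1)/2) ≤ (c+1)/2 := min_le_right _ _
      rw [ha_def]; linarith
    have haI : a ∈ Set.Icc (-1:ℝ) 1 := ⟨ham1, by linarith [hc.2]⟩
    have hball : ∀ s ∈ Set.Icc a c, F c / 2 < F s := by
      intro s hs
      apply hδ
      rw [Metric.mem_ball, Real.dist_eq]
      have h1 : |s - c| ≤ c - a := abs_sub_le_iff.mpr ⟨by linarith [hs.2], by linarith [hs.1]⟩
      have h2 : c - a = min (δ/2) ((c+1)/2) := by rw [ha_def]; ring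
      have h3 : min (δ/2) ((c+1)/2) ≤ δ/2 := min_le_left _ _
      rw [h2] at h1
      have h4 : |s - c| ≤ δ/2 := h1.trans h3
      linarith
    have key : (c - a) * Real.sqrt (F c) ≤ ∫ s in a..c, Real.sqrt (2 * F s) := by
      have hmono' : ∀ s ∈ Set.Icc a c, Real.sqrt (F c) ≤ Real.sqrt (2 * F s) := by
        intro s hs
        apply Real.sqrt_le_sqrt
        have := hball s hs
        linarith
      calc (c - a) * Real.sqrt (F c) = ∫ _ in a..c, Real.sqrt (F c) := by
            rw [intervalIntegral.integral_const, smul_eq_mul]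
          _ ≤ ∫ s in a..c, Real.sqrt (2 * F s) := by
            apply intervalIntegral.integral_mono_on hac.le intervalIntegrable_const
              (hii a c haI hcI) hmono'
    have hsplit : G c = (∫ s in (-1:ℝ)..a, Real.sqrt (2 * F s))
        + ∫ s in a..c, Real.sqrt (2 * F s) := by
      rw [hG c, ← intervalIntegral.integral_add_adjacent_intervals (hii (-1) a hm1 haI)
        (hii a c haI hcI)]
    have h1 : 0 ≤ ∫ s in (-1:ℝ)..a, Real.sqrt (2 * F s) :=
      intervalIntegral.integral_nonneg ham1 (fun s _ => Real.sqrt_nonneg _)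
    have h2 : 0 < (c - a) * Real.sqrt (F c) :=
      mul_pos (by linarith) (Real.sqrt_pos.mpr hFcpos)
    linarith [key, hsplit]
  intro y
  set c := u 0 y with hc_def
  have hc : c ∈ Set.Ioo (-1:ℝ) 1 := by
    have := abs_lt.mp (hub 0 y le_rfl); exact ⟨this.1, this.2⟩
  have hcI : c ∈ Set.Icc (-1:ℝ) 1 := ⟨hc.1.le, hc.2.le⟩
  -- nonnegativity of G c
  have hGc_nonneg : 0 ≤ G c := by
    have hs := hGsub (-1) c hm1 hcI
    have h0 : G (-1) = 0 := by rw [hG]; simp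
    have h1 : 0 ≤ ∫ s in (-1:ℝ)..c, Real.sqrt (2 * F s) :=
      intervalIntegral.integral_nonneg hc.1.le (fun s _ => Real.sqrt_nonneg _)
    linarith
  -- strict positivity of G c via Gronwall
  have hGcpos : 0 < G c := by
    by_contra hcon
    push_neg at hcon
    have hGc0 : G c = 0 := le_antisymm hcon hGc_nonneg
    have hFc : F c = 0 := by
      by_contra hne
      have hp : 0 < F c := lt_of_le_of_ne (hFnonneg c hcI) (Ne.symm hne)
      exact absurd hGc0 (ne_of_gt (hGpos_of_Fpos c hc hp))
    obtain ⟨M, hMnn, hquad⟩ := aux_quad F hF hFnonneg c hc hFc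
    set f : ℝ → ℝ := fun x => u x y - c with hf_def
    have hcontf : ContinuousOn f (Set.Icc 0 1) :=
      ((hxline y).continuous.sub continuous_const).continuousOn
    have hder : ∀ x ∈ Set.Ico (0:ℝ) 1,
        HasDerivWithinAt f (deriv (fun t => u t y) x) (Set.Ici x) x := by
      intro x _
      exact (((hdiffx y) x).hasDerivAt.sub_const c).hasDerivWithinAt
    have ha0 : ‖f 0‖ ≤ 0 := by simp [hf_def, hc_def]
    have hbound : ∀ x ∈ Set.Ico (0:ℝ) 1,
        ‖deriv (fun t => u t y) x‖ ≤ Real.sqrt (2*M) * ‖f x‖ + 0 := by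
      intro x hx
      have hx0 : (0:ℝ) ≤ x := hx.1
      have hux_nonneg : 0 ≤ deriv (fun t => u t y) x := by
        rcases eq_or_lt_of_le hx0 with heq|hlt
        · rw [← heq, hneumann y]
        · exact (hmono x y hlt).le
      have hw_nonneg : 0 ≤ f x := by
        rcases eq_or_lt_of_le hx0 with heq|hlt
        · simp [hf_def, ← heq, hc_def]
        · exact sub_nonneg.mpr (husm y 0 x le_rfl hlt).le
      have hux_mem : u x y ∈ Set.Icc c 1 := by
        constructor
        · have := hw_nonneg; simp only [hf_def] at this; linarith
        · exact (huIcc x y hx0).2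
      have hFu : F (u x y) ≤ M * (f x)^2 := by
        simpa [hf_def] using hquad (u x y) hux_mem
      have hsq : (deriv (fun t => u t y) x)^2 ≤ 2 * F (u x y) := by
        have := hmodica x y hx0; nlinarith [sq_nonneg (deriv (u x) y)]
      have hkey : deriv (fun t => u t y) x ≤ Real.sqrt (2*M) * f x := by
        have h1 : deriv (fun t => u t y) x = Real.sqrt ((deriv (fun t => u t y) x)^2) :=
          (Real.sqrt_sq hux_nonneg).symm
        rw [h1]
        calc Real.sqrt ((deriv (fun t => u t y) x)^2)
            ≤ Real.sqrt (2*M*(f x)^2) := Real.sqrt_le_sqrt (by nlinarith)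
          _ = Real.sqrt (2*M) * f x := by
              rw [Real.sqrt_mul (by positivity), Real.sqrt_sq hw_nonneg]
      rw [Real.norm_eq_abs, Real.norm_eq_abs, abs_of_nonneg hux_nonneg,
        abs_of_nonneg hw_nonneg]
      linarith
    have hg := norm_le_gronwallBound_of_norm_deriv_right_le hcontf hder ha0 hbound
      1 ⟨zero_le_one, le_rfl⟩
    have hle : ‖f 1‖ ≤ 0 := by
      simpa [gronwallBound_ε0_δ0] using hg
    have hlt : c < u 1 y := husm y 0 1 le_rfl zero_lt_one
    have : u 1 y - c = 0 := by simpa [hf_def] using hle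
    linarith
  -- main estimate
  have hmain : |h y| ≤ β - G c := by
    have habs_int : IntegrableOn
        (fun x => |deriv (u x) y * deriv (fun t => u t y) x|) (Set.Ioi 0) := (hint y).abs
    have hkey : ∀ T : ℝ, 0 ≤ T →
        (∫ x in (0:ℝ)..T, |deriv (u x) y * deriv (fun t => u t y) x|) ≤ β - G c := by
      intro T hT
      have hGu : ∀ x ∈ Set.uIcc (0:ℝ) T, HasDerivAt (fun x => G (u x y))
          (Real.sqrt (2 * F (u x y)) * deriv (fun t => u t y) x) x := by
        intro x hx
        have hx0 : 0 ≤ x := by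
          rw [Set.uIcc_of_le hT] at hx; exact hx.1
        have hmemx : Set.Icc (-1:ℝ) 1 ∈ nhds (u x y) :=
          Icc_mem_nhds (abs_lt.mp (hub x y hx0)).1 (abs_lt.mp (hub x y hx0)).2
        have hGder : HasDerivAt G (Real.sqrt (2 * F (u x y))) (u x y) := by
          have hGfun : G = fun t => ∫ s in (-1:ℝ)..t, Real.sqrt (2 * F s) := funext hG
          rw [hGfun]
          apply intervalIntegral.integral_hasDerivAt_right
            (hii (-1) (u x y) hm1 (huIcc x y hx0))
          · exact ⟨Set.Icc (-1:ℝ) 1, hmemx,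
              (hsqF_cont.aestronglyMeasurable measurableSet_Icc)⟩
          · exact (hsqF_cont (u x y) (huIcc x y hx0)).continuousAt hmemx
        exact hGder.comp x ((hdiffx y) x).hasDerivAt
      have hg_int : IntervalIntegrable
          (fun x => Real.sqrt (2 * F (u x y)) * deriv (fun t => u t y) x) volume 0 T := by
        apply ContinuousOn.intervalIntegrable
        apply ContinuousOn.mul
        · apply Real.continuous_sqrt.comp_continuousOn
          apply ContinuousOn.mul continuousOn_const
          apply hF.continuousOn.comp ((hxline y).continuous.continuousOn)
          intro x hx
          rw [Set.uIcc_of_le hT] at hx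
          exact huIcc x y hx.1
        · exact (hcontd y).continuousOn
      have hf_int : IntervalIntegrable
          (fun x => |deriv (u x) y * deriv (fun t => u t y) x|) volume 0 T := by
        rw [intervalIntegrable_iff_integrableOn_Ioc_of_le hT]
        exact ((hint y).mono_set Set.Ioc_subset_Ioi_self).abs
      have hmono_ineq : ∀ x ∈ Set.Icc (0:ℝ) T,
          |deriv (u x) y * deriv (fun t => u t y) x|
            ≤ Real.sqrt (2 * F (u x y)) * deriv (fun t => u t y) x := by
        intro x hx
        have hx0 : 0 ≤ x := hx.1
        have hux_nonneg : 0 ≤ deriv (fun t => u t y) x := by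
          rcases eq_or_lt_of_le hx0 with heq|hlt
          · rw [← heq, hneumann y]
          · exact (hmono x y hlt).le
        have hmod := hmodica x y hx0
        rw [abs_mul, abs_of_nonneg hux_nonneg]
        apply mul_le_mul_of_nonneg_right _ hux_nonneg
        have habs : |deriv (u x) y| = Real.sqrt ((deriv (u x) y)^2) :=
          (Real.sqrt_sq_eq_abs _).symm
        rw [habs]
        apply Real.sqrt_le_sqrt
        nlinarith [sq_nonneg (deriv (fun t => u t y) x)]
      calc (∫ x in (0:ℝ)..T, |deriv (u x) y * deriv (fun t => u t y) x|)
          ≤ ∫ x in (0:ℝ)..T, Real.sqrt (2 * F (u x y)) * deriv (fun t => u t y) x :=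
            intervalIntegral.integral_mono_on hT hf_int hg_int hmono_ineq
        _ = G (u T y) - G (u 0 y) :=
            intervalIntegral.integral_eq_sub_of_hasDerivAt hGu hg_int
        _ ≤ β - G c := by
            rw [hβ]
            have := hGmono (u T y) 1 (huIcc T y hT).2 (huIcc T y hT) h1I
            rw [← hc_def]
            linarith
    have htend := intervalIntegral_tendsto_integral_Ioi 0 habs_int Filter.tendsto_id
    have hlim : (∫ x in Set.Ioi (0:ℝ), |deriv (u x) y * deriv (fun t => u t y) x|)
        ≤ β - G c :=
      le_of_tendsto htend (Filter.eventually_atTop.mpr ⟨0, fun T hT => hkey T hT⟩)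
    rw [hh]
    refine le_trans ?_ hlim
    have := MeasureTheory.norm_integral_le_integral_norm
      (μ := volume.restrict (Set.Ioi (0:ℝ)))
      (f := fun x => deriv (u x) y * deriv (fun t => u t y) x)
    simpa only [Real.norm_eq_abs] using this
  exact ⟨hmain, sub_lt_self β hGcpos⟩
end

section
/- Let u solve u_xx + u_yy = F'(u) on the half-plane {x ≥ 0} with u_x(0,y)=0, and define h(y) = ∫_0^∞ u_y u_x dx, assuming the integral converges and that u_x(x,y) → 0 and u(x,y) → u⁺(y) in C¹ as x → ∞. Then h'(y) = [F(u⁺(y)) + (1/2)(u⁺)'(y)²] − [F(u(0,y)) + (1/2)u_y(0,y)²]. -/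
open Real MeasureTheory

private lemma hasDerivAt_sec1 {E : Type*} [NormedAddCommGroup E] [NormedSpace ℝ E]
    {f : ℝ × ℝ → E} {x y : ℝ} (hf : DifferentiableAt ℝ f (x, y)) :
    HasDerivAt (fun t => f (t, y)) (fderiv ℝ f (x, y) (1, 0)) x := by
  have := hf.hasFDerivAt.comp_hasDerivAt x ((hasDerivAt_id x).prodMk (hasDerivAt_const x y))
  exact this

private lemma hasDerivAt_sec2 {E : Type*} [NormedAddCommGroup E] [NormedSpace ℝ E]
    {f : ℝ × ℝ → E} {x y : ℝ} (hf : DifferentiableAt ℝ f (x, y)) :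
    HasDerivAt (fun s => f (x, s)) (fderiv ℝ f (x, y) (0, 1)) y := by
  have := hf.hasFDerivAt.comp_hasDerivAt y ((hasDerivAt_const y x).prodMk (hasDerivAt_id y))
  exact this

noncomputable def pUx (u : ℝ → ℝ → ℝ) (x y : ℝ) : ℝ :=
  fderiv ℝ (fun q : ℝ × ℝ => u q.1 q.2) (x, y) (1, 0)

noncomputable def pUy (u : ℝ → ℝ → ℝ) (x y : ℝ) : ℝ :=
  fderiv ℝ (fun q : ℝ × ℝ => u q.1 q.2) (x, y) (0, 1)

noncomputable def pA (u : ℝ → ℝ → ℝ) (x y : ℝ) : ℝ × ℝ →L[ℝ] ℝ × ℝ →L[ℝ] ℝ :=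
  fderiv ℝ (fderiv ℝ (fun q : ℝ × ℝ => u q.1 q.2)) (x, y)

/-- `u_y * u_x` -/
noncomputable def pP (u : ℝ → ℝ → ℝ) (x y : ℝ) : ℝ := pUy u x y * pUx u x y

/-- `∂_y (u_y u_x) = u_yy u_x + u_y u_xy` -/
noncomputable def pq (u : ℝ → ℝ → ℝ) (x y : ℝ) : ℝ :=
  pA u x y (0, 1) (0, 1) * pUx u x y + pUy u x y * pA u x y (0, 1) (1, 0)

/-- `F(u) + u_y²/2 - u_x²/2` -/
noncomputable def pG (F : ℝ → ℝ) (u : ℝ → ℝ → ℝ) (x y : ℝ) : ℝ :=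
  F (u x y) + (1 / 2) * pUy u x y ^ 2 - (1 / 2) * pUx u x y ^ 2

section basic
variable {u : ℝ → ℝ → ℝ} (hu : ContDiff ℝ 3 (fun p : ℝ × ℝ => u p.1 p.2))
include hu

lemma hUdiff : Differentiable ℝ (fun p : ℝ × ℝ => u p.1 p.2) :=
  hu.differentiable (by norm_num)

lemma hU2 : ContDiff ℝ 2 (fderiv ℝ (fun p : ℝ × ℝ => u p.1 p.2)) :=
  hu.fderiv_right (by norm_num)

lemma hU2diff : Differentiable ℝ (fderiv ℝ (fun p : ℝ × ℝ => u p.1 p.2)) :=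
  (hU2 hu).differentiable (by norm_num)

lemma hderiv_x (x y : ℝ) : HasDerivAt (fun t => u t y) (pUx u x y) x :=
  hasDerivAt_sec1 ((hUdiff hu) (x, y))

lemma hderiv_y (x y : ℝ) : HasDerivAt (u x) (pUy u x y) y :=
  hasDerivAt_sec2 ((hUdiff hu) (x, y))

lemma hderiv_xx (x y : ℝ) :
    HasDerivAt (fun t => pUx u t y) (pA u x y (1, 0) (1, 0)) x := by
  have h1 := hasDerivAt_sec1 ((hU2diff hu) (x, y))
  have := h1.clm_apply (hasDerivAt_const x ((1 : ℝ), (0 : ℝ)))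
  simpa [pUx, pA] using this

lemma hderiv_xy (x y : ℝ) :
    HasDerivAt (fun s => pUx u x s) (pA u x y (0, 1) (1, 0)) y := by
  have h1 := hasDerivAt_sec2 ((hU2diff hu) (x, y))
  have := h1.clm_apply (hasDerivAt_const y ((1 : ℝ), (0 : ℝ)))
  simpa [pUx, pA] using this

lemma hderiv_yx (x y : ℝ) :
    HasDerivAt (fun t => pUy u t y) (pA u x y (1, 0) (0, 1)) x := by
  have h1 := hasDerivAt_sec1 ((hU2diff hu) (x, y))
  have := h1.clm_apply (hasDerivAt_const x ((0 : ℝ), (1 : ℝ)))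
  simpa [pUy, pA] using this

lemma hderiv_yy (x y : ℝ) :
    HasDerivAt (fun s => pUy u x s) (pA u x y (0, 1) (0, 1)) y := by
  have h1 := hasDerivAt_sec2 ((hU2diff hu) (x, y))
  have := h1.clm_apply (hasDerivAt_const y ((0 : ℝ), (1 : ℝ)))
  simpa [pUy, pA] using this

lemma pA_symm (x y : ℝ) (v w : ℝ × ℝ) : pA u x y v w = pA u x y w v :=
  second_derivative_symmetric (fun p => ((hUdiff hu) p).hasFDerivAt)
    ((hU2diff hu) (x, y)).hasFDerivAt v w

lemma cont_pUx : Continuous (fun p : ℝ × ℝ => pUx u p.1 p.2) :=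
  ((hU2 hu).continuous.clm_apply continuous_const)

lemma cont_pUy : Continuous (fun p : ℝ × ℝ => pUy u p.1 p.2) :=
  ((hU2 hu).continuous.clm_apply continuous_const)

lemma cont_pA (v w : ℝ × ℝ) : Continuous (fun p : ℝ × ℝ => pA u p.1 p.2 v w) := by
  have : ContDiff ℝ 1 (fderiv ℝ (fderiv ℝ (fun p : ℝ × ℝ => u p.1 p.2))) :=
    (hU2 hu).fderiv_right (by norm_num)
  exact ((this.continuous.clm_apply continuous_const).clm_apply continuous_const)

lemma cont_pq : Continuous (fun p : ℝ × ℝ => pq u p.1 p.2) := by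
  unfold pq
  exact ((cont_pA hu (0,1) (0,1)).mul (cont_pUx hu)).add
    ((cont_pUy hu).mul (cont_pA hu (0,1) (1,0)))

/-- `y ↦ P x y` has derivative `q x y`. -/
lemma hderiv_pP (x y : ℝ) : HasDerivAt (fun s => pP u x s) (pq u x y) y :=
  (hderiv_yy hu x y).mul (hderiv_xy hu x y)

end basic

/-- Derivative formula for `h(y) = ∫_0^∞ u_y u_x dx` on the half-plane. -/
theorem stmt_5
    (F : ℝ → ℝ) (u : ℝ → ℝ → ℝ) (uplus : ℝ → ℝ)
    (hF : ContDiffOn ℝ 2 F (Set.Icc (-1) 1))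
    (hu : ContDiff ℝ 3 (fun p : ℝ × ℝ => u p.1 p.2))
    (hub : ∀ x y : ℝ, 0 ≤ x → |u x y| ≤ 1)
    (hpde : ∀ x y : ℝ, 0 ≤ x →
      deriv (deriv (fun t => u t y)) x + deriv (deriv (u x)) y = deriv F (u x y))
    (hneumann : ∀ y : ℝ, deriv (fun t => u t y) 0 = 0)
    (hint : ∀ y : ℝ, IntegrableOn
      (fun x => (deriv (u x) y) * (deriv (fun t => u t y) x)) (Set.Ioi (0 : ℝ)))
    (hlim : ∀ y : ℝ, Filter.Tendsto (fun x => u x y) Filter.atTop (nhds (uplus y)))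
    (hlimy : ∀ y : ℝ, Filter.Tendsto (fun x => deriv (u x) y) Filter.atTop
      (nhds (deriv uplus y)))
    (hlimx : ∀ y : ℝ,
      Filter.Tendsto (fun x => deriv (fun t => u t y) x) Filter.atTop (nhds 0))
    (hdecay : ∃ C ν : ℝ, 0 < ν ∧ ∀ x y : ℝ, 0 ≤ x →
      |deriv (fun t => u t y) x| + |deriv (u x) y - deriv uplus y| +
        |u x y - uplus y| ≤ C * Real.exp (-ν * x))
    (h : ℝ → ℝ)
    (hh : ∀ y : ℝ, h y = ∫ x in Set.Ioi (0 : ℝ),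
      (deriv (u x) y) * (deriv (fun t => u t y) x)) :
    ∀ y : ℝ, deriv h y =
      (F (uplus y) + (1 / 2) * (deriv uplus y) ^ 2)
        - (F (u 0 y) + (1 / 2) * (deriv (u 0) y) ^ 2) := by
  obtain ⟨C, ν, hν, hdec⟩ := hdecay
  -- rewrite the basic derivatives
  have EdX : ∀ x y : ℝ, deriv (fun t => u t y) x = pUx u x y :=
    fun x y => (hderiv_x hu x y).deriv
  have EdY : ∀ x y : ℝ, deriv (u x) y = pUy u x y :=
    fun x y => (hderiv_y hu x y).deriv
  have hdec' : ∀ x y : ℝ, 0 ≤ x →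
      |pUx u x y| + |pUy u x y - deriv uplus y| + |u x y - uplus y|
        ≤ C * Real.exp (-ν * x) := by
    intro x y hx
    have := hdec x y hx
    rwa [EdX, EdY] at this
  have hC0 : 0 ≤ C := by
    have := hdec' 0 0 le_rfl
    have h0 : (0:ℝ) ≤ |pUx u 0 0| + |pUy u 0 0 - deriv uplus 0| + |u 0 0 - uplus 0| := by
      positivity
    have he : Real.exp (-ν * 0) = 1 := by norm_num
    nlinarith [this, h0]
  have hexp1 : ∀ x : ℝ, 0 ≤ x → Real.exp (-ν * x) ≤ 1 := by
    intro x hx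
    rw [Real.exp_le_one_iff]
    nlinarith
  have hbUx : ∀ x y : ℝ, 0 ≤ x → |pUx u x y| ≤ C := by
    intro x y hx
    have h1 := hdec' x y hx
    have h2 := hexp1 x hx
    have h3 : (0:ℝ) ≤ |pUy u x y - deriv uplus y| + |u x y - uplus y| := by positivity
    nlinarith
  have hbUyd : ∀ x y : ℝ, 0 ≤ x → |pUy u x y - deriv uplus y| ≤ C := by
    intro x y hx
    have h1 := hdec' x y hx
    have h2 := hexp1 x hx
    have h3 : (0:ℝ) ≤ |pUx u x y| + |u x y - uplus y| := by positivity
    nlinarith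
  have hbUy : ∀ x y : ℝ, 0 ≤ x → |pUy u x y| ≤ 2 * C + |pUy u 0 y| := by
    intro x y hx
    have h1 := hbUyd x y hx
    have h2 := hbUyd 0 y le_rfl
    have t1 : |pUy u x y| ≤ |pUy u x y - deriv uplus y| + |deriv uplus y| := by
      calc |pUy u x y| = |(pUy u x y - deriv uplus y) + deriv uplus y| := by ring_nf
        _ ≤ _ := abs_add_le _ _
    have t2 : |deriv uplus y| ≤ |pUy u 0 y - deriv uplus y| + |pUy u 0 y| := by
      calc |deriv uplus y| = |-(pUy u 0 y - deriv uplus y) + pUy u 0 y| := by ring_nf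
        _ ≤ |-(pUy u 0 y - deriv uplus y)| + |pUy u 0 y| := abs_add_le _ _
        _ = _ := by rw [abs_neg]
    linarith
  -- Neumann: pUx u 0 y = 0
  have hUx0 : ∀ y : ℝ, pUx u 0 y = 0 := fun y => by rw [← EdX, hneumann]
  -- the pde in terms of pA
  have hpde' : ∀ x y : ℝ, 0 ≤ x →
      pA u x y (1,0) (1,0) + pA u x y (0,1) (0,1) = deriv F (u x y) := by
    intro x y hx
    have e1 : deriv (fun t => u t y) = fun t => pUx u t y :=
      funext fun t => (hderiv_x hu t y).deriv
    have e2 : deriv (u x) = fun s => pUy u x s :=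
      funext fun s => (hderiv_y hu x s).deriv
    have := hpde x y hx
    rwa [e1, e2, (hderiv_xx hu x y).deriv, (hderiv_yy hu x y).deriv] at this
  -- continuity facts
  have hFc : ContinuousOn F (Set.Icc (-1) 1) := hF.continuousOn
  have hsecx_cont : ∀ x : ℝ, Continuous (fun y => u x y) := by
    intro x
    exact hu.continuous.comp (continuous_const.prodMk continuous_id)
  have hsecy_cont : ∀ y : ℝ, Continuous (fun x => u x y) := by
    intro y
    exact hu.continuous.comp (continuous_id.prodMk continuous_const)
  have cUy0 : Continuous (fun y => pUy u 0 y) :=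
    (cont_pUy hu).comp (continuous_const.prodMk continuous_id)
  -- uplus is in Icc
  have huplusIcc : ∀ y : ℝ, uplus y ∈ Set.Icc (-1 : ℝ) 1 := by
    intro y
    have : ∀ᶠ x in Filter.atTop, u x y ∈ Set.Icc (-1 : ℝ) 1 := by
      filter_upwards [Filter.eventually_ge_atTop (0:ℝ)] with x hx
      exact abs_le.1 (hub x y hx)
    exact isClosed_Icc.mem_of_tendsto (hlim y) this
  -- exp decay tends to 0
  have hexp0 : Filter.Tendsto (fun x : ℝ => C * Real.exp (-ν * x))
      Filter.atTop (nhds 0) := by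
    have h1 : Filter.Tendsto (fun x : ℝ => -ν * x) Filter.atTop Filter.atBot :=
      Filter.Tendsto.const_mul_atTop_of_neg (by linarith) Filter.tendsto_id
    have h2 : Filter.Tendsto (fun x : ℝ => Real.exp (-ν * x)) Filter.atTop (nhds 0) :=
      Real.tendsto_exp_atBot.comp h1
    have := h2.const_mul C
    simpa using this
  -- uniform convergence  & continuity of uplus, deriv uplus
  have tu1 : TendstoUniformly (fun x y => u x y) uplus Filter.atTop := by
    rw [Metric.tendstoUniformly_iff]
    intro ε hε
    filter_upwards [hexp0.eventually_lt_const hε, Filter.eventually_ge_atTop (0:ℝ)]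
      with x h1 h2 y
    rw [Real.dist_eq]
    have := hdec' x y h2
    have h3 : (0:ℝ) ≤ |pUx u x y| + |pUy u x y - deriv uplus y| := by positivity
    have : |u x y - uplus y| ≤ C * Real.exp (-ν * x) := by linarith
    rw [abs_sub_comm] at this
    linarith
  have tu2 : TendstoUniformly (fun x y => pUy u x y) (deriv uplus) Filter.atTop := by
    rw [Metric.tendstoUniformly_iff]
    intro ε hε
    filter_upwards [hexp0.eventually_lt_const hε, Filter.eventually_ge_atTop (0:ℝ)]
      with x h1 h2 y
    rw [Real.dist_eq]
    have := hdec' x y h2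
    have h3 : (0:ℝ) ≤ |pUx u x y| + |u x y - uplus y| := by positivity
    have : |pUy u x y - deriv uplus y| ≤ C * Real.exp (-ν * x) := by linarith
    rw [abs_sub_comm] at this
    linarith
  have cuplus : Continuous uplus :=
    tu1.continuous (Filter.Frequently.of_forall fun x => hsecx_cont x)
  have cduplus : Continuous (deriv uplus) :=
    tu2.continuous (Filter.Frequently.of_forall fun x =>
      (cont_pUy hu).comp (continuous_const.prodMk continuous_id))
  -- bound on F
  obtain ⟨MF, hMF⟩ := isCompact_Icc.exists_bound_of_continuousOn hFc
  -- continuity of pG in y (for fixed x ≥ 0)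
  have cG : ∀ x : ℝ, 0 ≤ x → Continuous (fun y => pG F u x y) := by
    intro x hx
    have c1 : Continuous (fun y => F (u x y)) :=
      hFc.comp_continuous (hsecx_cont x) (fun y => abs_le.1 (hub x y hx))
    have c2 : Continuous (fun y => pUy u x y) :=
      (cont_pUy hu).comp (continuous_const.prodMk continuous_id)
    have c3 : Continuous (fun y => pUx u x y) :=
      (cont_pUx hu).comp (continuous_const.prodMk continuous_id)
    exact (c1.add (continuous_const.mul (c2.pow 2))).sub (continuous_const.mul (c3.pow 2))
  -- rewrite h as integral of pP
  have hh' : ∀ y : ℝ, h y = ∫ x in Set.Ioi (0:ℝ), pP u x y := by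
    intro y
    rw [hh y]
    congr 1
    funext x
    rw [EdX, EdY]; rfl
  have hint' : ∀ y : ℝ, IntegrableOn (fun x => pP u x y) (Set.Ioi (0:ℝ)) := by
    intro y
    have := hint y
    have e : (fun x => deriv (u x) y * deriv (fun t => u t y) x)
        = fun x => pP u x y := by
      funext x; rw [EdX, EdY]; rfl
    rwa [e] at this
  -- the derivative of x ↦ pG F u x y  for x > 0
  have hGderiv : ∀ y x : ℝ, 0 < x → HasDerivAt (fun t => pG F u t y) (pq u x y) x := by
    intro y x hx
    have habs : |u x y| ≤ 1 := hub x y hx.le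
    have hFU : HasDerivAt (fun t => F (u t y)) (deriv F (u x y) * pUx u x y) x := by
      rcases lt_or_eq_of_le habs with hlt | heq
      · -- interior case
        have hmem : Set.Icc (-1:ℝ) 1 ∈ nhds (u x y) := by
          rcases abs_lt.1 hlt with ⟨h1, h2⟩
          exact Icc_mem_nhds h1 h2
        have hd : DifferentiableAt ℝ F (u x y) :=
          (hF.contDiffAt hmem).differentiableAt (by norm_num)
        have := hd.hasDerivAt.comp x (hderiv_x hu x y)
        exact this
      · -- boundary case: u x y = ±1, and then pUx u x y = 0
        have hUxz : pUx u x y = 0 := by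
          rcases (abs_eq (by norm_num : (0:ℝ) ≤ 1)).1 heq with h1 | h1
          · -- local max
            have hmax : IsLocalMax (fun t => u t y) x := by
              filter_upwards [eventually_gt_nhds hx] with t ht
              rw [h1]
              exact (abs_le.1 (hub t y ht.le)).2
            exact hmax.hasDerivAt_eq_zero (hderiv_x hu x y)
          · -- local min
            have hmin : IsLocalMin (fun t => u t y) x := by
              filter_upwards [eventually_gt_nhds hx] with t ht
              rw [h1]
              exact (abs_le.1 (hub t y ht.le)).1
            exact hmin.hasDerivAt_eq_zero (hderiv_x hu x y)
        have hmemIcc : u x y ∈ Set.Icc (-1:ℝ) 1 := abs_le.1 habs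
        have hFW : HasDerivWithinAt F (derivWithin F (Set.Icc (-1:ℝ) 1) (u x y))
            (Set.Icc (-1:ℝ) 1) (u x y) :=
          ((hF.differentiableOn (by norm_num)) (u x y) hmemIcc).hasDerivWithinAt
        have hsec : HasDerivWithinAt (fun t => u t y) 0 (Set.Ici 0) x := by
          rw [← hUxz]
          exact (hderiv_x hu x y).hasDerivWithinAt
        have hmaps : Set.MapsTo (fun t => u t y) (Set.Ici 0) (Set.Icc (-1:ℝ) 1) :=
          fun t ht => abs_le.1 (hub t y ht)
        have hcomp := hFW.comp x hsec hmaps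
        rw [mul_zero] at hcomp
        have := hcomp.hasDerivAt (Ici_mem_nhds hx)
        rw [hUxz, mul_zero]
        exact this
    have hY2 : HasDerivAt (fun t => (1/2 : ℝ) * pUy u t y ^ 2)
        ((1/2 : ℝ) * ((2:ℕ) * pUy u x y ^ 1 * pA u x y (1,0) (0,1))) x :=
      ((hderiv_yx hu x y).pow 2).const_mul _
    have hX2 : HasDerivAt (fun t => (1/2 : ℝ) * pUx u t y ^ 2)
        ((1/2 : ℝ) * ((2:ℕ) * pUx u x y ^ 1 * pA u x y (1,0) (1,0))) x :=
      ((hderiv_xx hu x y).pow 2).const_mul _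
    have total := (hFU.add hY2).sub hX2
    have hval : deriv F (u x y) * pUx u x y
        + (1/2 : ℝ) * ((2:ℕ) * pUy u x y ^ 1 * pA u x y (1,0) (0,1))
        - (1/2 : ℝ) * ((2:ℕ) * pUx u x y ^ 1 * pA u x y (1,0) (1,0)) = pq u x y := by
      rw [← hpde' x y hx.le, pA_symm hu x y (1,0) (0,1)]
      unfold pq
      push_cast
      ring
    rw [hval] at total
    exact total
  have cFuplus : Continuous (fun y => F (uplus y)) :=
    hFc.comp_continuous cuplus huplusIcc
  have cGinf : Continuous (fun y => F (uplus y) + (1/2) * (deriv uplus y)^2) :=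
    cFuplus.add (continuous_const.mul (cduplus.pow 2))
  -- the fundamental identity: for a ≤ b, h b - h a = ∫ y in a..b, Φ y
  set Φ : ℝ → ℝ := fun y => (F (uplus y) + (1/2) * (deriv uplus y)^2) - pG F u 0 y
    with hΦdef
  have key : ∀ a b : ℝ, a ≤ b → h b - h a = ∫ y in a..b, Φ y := by
    intro a b hab
    -- Step 1 : FTC in y
    have step1 : ∀ x : ℝ, ∫ y in a..b, pq u x y = pP u x b - pP u x a := by
      intro x
      refine intervalIntegral.integral_eq_sub_of_hasDerivAt
        (fun s _ => hderiv_pP hu x s) ?_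
      exact ((cont_pq hu).comp (continuous_const.prodMk continuous_id)).intervalIntegrable a b
    -- Step 2 : FTC in x
    have step2 : ∀ R : ℝ, 0 ≤ R → ∀ y : ℝ,
        ∫ x in (0:ℝ)..R, pq u x y = pG F u R y - pG F u 0 y := by
      intro R hR y
      refine intervalIntegral.integral_eq_sub_of_hasDerivAt_of_le hR ?_
        (fun x hx => hGderiv y x hx.1) ?_
      · -- continuity of x ↦ pG F u x y on Icc 0 R
        have c1 : ContinuousOn (fun x => F (u x y)) (Set.Icc 0 R) := by
          refine hFc.comp (hsecy_cont y).continuousOn ?_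
          intro x hx
          exact abs_le.1 (hub x y hx.1)
        have c2 : Continuous (fun x => pUy u x y) :=
          (cont_pUy hu).comp (continuous_id.prodMk continuous_const)
        have c3 : Continuous (fun x => pUx u x y) :=
          (cont_pUx hu).comp (continuous_id.prodMk continuous_const)
        exact (c1.add (continuous_const.mul (c2.pow 2)).continuousOn).sub
          (continuous_const.mul (c3.pow 2)).continuousOn
      · exact ((cont_pq hu).comp (continuous_id.prodMk continuous_const)).intervalIntegrable 0 R
    -- Step 3 : Fubini on the rectangle
    have step3 : ∀ R : ℝ, 0 ≤ R →
        ∫ x in (0:ℝ)..R, (pP u x b - pP u x a)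
          = ∫ y in a..b, (pG F u R y - pG F u 0 y) := by
      intro R hR
      have hInt : Integrable (Function.uncurry fun x y => pq u x y)
          ((volume.restrict (Set.Ioc (0:ℝ) R)).prod (volume.restrict (Set.Ioc a b))) := by
        rw [Measure.prod_restrict]
        refine IntegrableOn.mono_set
          (t := Set.Icc (0:ℝ) R ×ˢ Set.Icc a b)
          ((cont_pq hu).continuousOn.integrableOn_compact
            (isCompact_Icc.prod isCompact_Icc)) ?_
        exact Set.prod_mono Set.Ioc_subset_Icc_self Set.Ioc_subset_Icc_self
      calc ∫ x in (0:ℝ)..R, (pP u x b - pP u x a)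
          = ∫ x in (0:ℝ)..R, ∫ y in a..b, pq u x y :=
            (intervalIntegral.integral_congr fun x _ => (step1 x).symm)
        _ = ∫ x in Set.Ioc (0:ℝ) R, ∫ y in Set.Ioc a b, pq u x y := by
            rw [intervalIntegral.integral_of_le hR]
            refine setIntegral_congr_fun measurableSet_Ioc fun x _ => ?_
            rw [intervalIntegral.integral_of_le hab]
        _ = ∫ y in Set.Ioc a b, ∫ x in Set.Ioc (0:ℝ) R, pq u x y :=
            integral_integral_swap hInt
        _ = ∫ y in a..b, ∫ x in (0:ℝ)..R, pq u x y := by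
            rw [intervalIntegral.integral_of_le hab]
            refine setIntegral_congr_fun measurableSet_Ioc fun y _ => ?_
            rw [intervalIntegral.integral_of_le hR]
        _ = ∫ y in a..b, (pG F u R y - pG F u 0 y) :=
            intervalIntegral.integral_congr fun y _ => step2 R hR y
    -- Step 4 : the limit of the left side
    have step4 : Filter.Tendsto (fun R => ∫ x in (0:ℝ)..R, (pP u x b - pP u x a))
        Filter.atTop (nhds (h b - h a)) := by
      have t1 := intervalIntegral_tendsto_integral_Ioi 0 (hint' b) Filter.tendsto_id
      have t2 := intervalIntegral_tendsto_integral_Ioi 0 (hint' a) Filter.tendsto_id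
      have e : ∀ R : ℝ, ∫ x in (0:ℝ)..R, (pP u x b - pP u x a)
          = (∫ x in (0:ℝ)..R, pP u x b) - ∫ x in (0:ℝ)..R, pP u x a := by
        intro R
        refine intervalIntegral.integral_sub ?_ ?_
        · exact (((cont_pUy hu).comp (continuous_id.prodMk continuous_const)).mul
            ((cont_pUx hu).comp (continuous_id.prodMk continuous_const))).intervalIntegrable 0 R
        · exact (((cont_pUy hu).comp (continuous_id.prodMk continuous_const)).mul
            ((cont_pUx hu).comp (continuous_id.prodMk continuous_const))).intervalIntegrable 0 R
      rw [hh' a, hh' b]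
      simp only [e]
      exact t1.sub t2
    -- Step 5 : the limit of the right side
    have step5 : Filter.Tendsto (fun R => ∫ y in a..b, (pG F u R y - pG F u 0 y))
        Filter.atTop (nhds (∫ y in a..b, Φ y)) := by
      have hG0int : IntervalIntegrable (fun y => pG F u 0 y) volume a b :=
        (cG 0 le_rfl).intervalIntegrable a b
      have e : (fun R => (∫ y in a..b, pG F u R y) - ∫ y in a..b, pG F u 0 y)
          =ᶠ[Filter.atTop] fun R => ∫ y in a..b, (pG F u R y - pG F u 0 y) := by
        filter_upwards [Filter.eventually_ge_atTop (0:ℝ)] with R hR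
        exact (intervalIntegral.integral_sub ((cG R hR).intervalIntegrable a b) hG0int).symm
      have main : Filter.Tendsto (fun R => ∫ y in a..b, pG F u R y) Filter.atTop
          (nhds (∫ y in a..b, (F (uplus y) + (1/2) * (deriv uplus y)^2))) := by
        simp only [intervalIntegral.integral_of_le hab]
        refine tendsto_integral_filter_of_dominated_convergence
          (fun y => MF + (1/2) * (2*C + |pUy u 0 y|)^2 + (1/2) * C^2) ?_ ?_ ?_ ?_
        · filter_upwards [Filter.eventually_ge_atTop (0:ℝ)] with R hR
          exact (cG R hR).aestronglyMeasurable
        · filter_upwards [Filter.eventually_ge_atTop (0:ℝ)] with R hR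
          refine Filter.Eventually.of_forall fun y => ?_
          have b1 : |F (u R y)| ≤ MF := by
            have := hMF _ (abs_le.1 (hub R y hR))
            simpa [Real.norm_eq_abs] using this
          have b2 : pUy u R y ^ 2 ≤ (2*C + |pUy u 0 y|)^2 := by
            have h1 := hbUy R y hR
            have h2 := abs_nonneg (pUy u R y)
            nlinarith [sq_abs (pUy u R y)]
          have b3 : pUx u R y ^ 2 ≤ C^2 := by
            have h1 := hbUx R y hR
            have h2 := abs_nonneg (pUx u R y)
            nlinarith [sq_abs (pUx u R y)]
          rw [Real.norm_eq_abs, abs_le]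
          rcases abs_le.1 b1 with ⟨b1l, b1r⟩
          constructor <;> simp only [pG] <;>
            nlinarith [sq_nonneg (pUx u R y), sq_nonneg (pUy u R y)]
        · refine (Continuous.integrableOn_Ioc ?_)
          exact (continuous_const.add (continuous_const.mul
            ((continuous_const.add cUy0.abs).pow 2))).add continuous_const
        · refine Filter.Eventually.of_forall fun y => ?_
          have hlimy' : Filter.Tendsto (fun x => pUy u x y) Filter.atTop
              (nhds (deriv uplus y)) := by
            have e2 : (fun x => deriv (u x) y) = fun x => pUy u x y :=
              funext fun x => EdY x y
            have := hlimy y; rwa [e2] at this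
          have hlimx' : Filter.Tendsto (fun x => pUx u x y) Filter.atTop (nhds 0) := by
            have e2 : (fun x => deriv (fun t => u t y) x) = fun x => pUx u x y :=
              funext fun x => EdX x y
            have := hlimx y; rwa [e2] at this
          have hmem : ∀ᶠ x in Filter.atTop, u x y ∈ Set.Icc (-1:ℝ) 1 := by
            filter_upwards [Filter.eventually_ge_atTop (0:ℝ)] with x hx
            exact abs_le.1 (hub x y hx)
          have tF : Filter.Tendsto (fun R => F (u R y)) Filter.atTop
              (nhds (F (uplus y))) :=
            ((hFc (uplus y) (huplusIcc y)).tendsto).comp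
              (tendsto_nhdsWithin_of_tendsto_nhds_of_eventually_within _ (hlim y) hmem)
          have t2 := Filter.Tendsto.const_mul (1/2 : ℝ) (hlimy'.pow 2)
          have t3 := Filter.Tendsto.const_mul (1/2 : ℝ) (hlimx'.pow 2)
          have total := (tF.add t2).sub t3
          simp only [pG]
          convert total using 2
          norm_num
      have egoal : ∫ y in a..b, Φ y
          = (∫ y in a..b, (F (uplus y) + (1/2) * (deriv uplus y)^2))
            - ∫ y in a..b, pG F u 0 y :=
        intervalIntegral.integral_sub (cGinf.intervalIntegrable a b) hG0int
      rw [egoal]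
      exact (main.sub_const _).congr' e
    -- combine
    have heq : (fun R => ∫ x in (0:ℝ)..R, (pP u x b - pP u x a))
        =ᶠ[Filter.atTop] fun R => ∫ y in a..b, (pG F u R y - pG F u 0 y) := by
      filter_upwards [Filter.eventually_ge_atTop (0:ℝ)] with R hR
      exact step3 R hR
    exact tendsto_nhds_unique (step4.congr' heq) step5
  -- conclude: h has derivative Φ y everywhere
  have cΦ : Continuous Φ := by
    exact (cGinf.sub (cG 0 le_rfl))
  have hfact : ∀ t : ℝ, h t = h 0 + ∫ s in (0:ℝ)..t, Φ s := by
    intro t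
    rcases le_total 0 t with ht | ht
    · have := key 0 t ht
      linarith
    · have := key t 0 ht
      rw [intervalIntegral.integral_symm 0 t] at this
      linarith
  intro y
  have hD : HasDerivAt h (Φ y) y := by
    have : HasDerivAt (fun t => h 0 + ∫ s in (0:ℝ)..t, Φ s) (Φ y) y := by
      refine HasDerivAt.const_add _ ?_
      exact intervalIntegral.integral_hasDerivAt_right
        (cΦ.intervalIntegrable 0 y)
        (cΦ.stronglyMeasurableAtFilter volume (nhds y))
        cΦ.continuousAt
    have e : h = fun t => h 0 + ∫ s in (0:ℝ)..t, Φ s := funext hfact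
    rw [e]
    exact this
  rw [hD.deriv, hΦdef]
  simp only [pG, hUx0 y, EdY]
  ring
end

section
/- Hamiltonian identity: let u be a C³ solution of u_xx + u_yy = F'(u) on ℝ² such that u(x,y) → ±1 and ∇u(x,y) → 0 as y → ±∞ (uniformly on compact x-sets, with exponential decay in |y|). Then the quantity ρ(x) = ∫_{-∞}^{∞} [F(u(x,y)) + (1/2)u_y(x,y)² − (1/2)u_x(x,y)²] dy is independent of x. -/
open Real MeasureTheory

namespace Stmt6Aux

open Set Filter Asymptotics

lemma pd_fst {ψ : ℝ × ℝ → ℝ} {L : ℝ × ℝ →L[ℝ] ℝ} {p : ℝ × ℝ}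
    (h : HasFDerivAt ψ L p) : HasDerivAt (fun t => ψ (t, p.2)) (L (1, 0)) p.1 := by
  have h1 : HasDerivAt (fun t : ℝ => (t, p.2)) ((1 : ℝ), (0 : ℝ)) p.1 :=
    (hasDerivAt_id p.1).prodMk (hasDerivAt_const _ _)
  simpa [Function.comp_def] using h.comp_hasDerivAt p.1 h1

lemma pd_snd {ψ : ℝ × ℝ → ℝ} {L : ℝ × ℝ →L[ℝ] ℝ} {p : ℝ × ℝ}
    (h : HasFDerivAt ψ L p) : HasDerivAt (fun s => ψ (p.1, s)) (L (0, 1)) p.2 := by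
  have h1 : HasDerivAt (fun s : ℝ => (p.1, s)) ((0 : ℝ), (1 : ℝ)) p.2 :=
    (hasDerivAt_const _ _).prodMk (hasDerivAt_id p.2)
  simpa [Function.comp_def] using h.comp_hasDerivAt p.2 h1

lemma hasFDerivAt_fderiv_apply {U : ℝ × ℝ → ℝ} (hU : ContDiff ℝ 3 U) (p : ℝ × ℝ) (w : ℝ × ℝ) :
    HasFDerivAt (fun q => fderiv ℝ U q w) ((fderiv ℝ (fderiv ℝ U) p).flip w) p := by
  have hDU : ContDiff ℝ 2 (fderiv ℝ U) := hU.fderiv_right (by norm_num)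
  have h1 : HasFDerivAt (fderiv ℝ U) (fderiv ℝ (fderiv ℝ U) p) p :=
    ((hDU.differentiable (by norm_num)) p).hasFDerivAt
  simpa using h1.clm_apply (hasFDerivAt_const w p)

lemma hasFDerivAt_FU {F : ℝ → ℝ} {U : ℝ × ℝ → ℝ}
    (hF : ContDiffOn ℝ 2 F (Set.Icc (-1) 1))
    (hUdiff : Differentiable ℝ U)
    (hub : ∀ p, |U p| ≤ 1) (p : ℝ × ℝ) :
    HasFDerivAt (fun q => F (U q)) (deriv F (U p) • fderiv ℝ U p) p := by
  have hUp : HasFDerivAt U (fderiv ℝ U p) p := (hUdiff p).hasFDerivAt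
  by_cases hin : |U p| < 1
  · have hmem : U p ∈ Set.Ioo (-1 : ℝ) 1 := by
      rcases abs_lt.mp hin with ⟨h1, h2⟩; exact ⟨h1, h2⟩
    have hca : ContDiffAt ℝ 2 F (U p) := hF.contDiffAt (Icc_mem_nhds hmem.1 hmem.2)
    have hFd : HasDerivAt F (deriv F (U p)) (U p) :=
      (hca.differentiableAt (by norm_num)).hasDerivAt
    exact hFd.comp_hasFDerivAt p hUp
  · have habs : |U p| = 1 := le_antisymm (hub p) (not_lt.mp hin)
    have h0 : fderiv ℝ U p = 0 := by
      rcases (abs_eq (by norm_num : (0:ℝ) ≤ 1)).mp habs with h1 | h1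
      · have hmax : IsLocalMax U p :=
          Filter.Eventually.of_forall fun q => by
            rw [h1]; exact (abs_le.mp (hub q)).2
        exact hmax.fderiv_eq_zero
      · have hmin : IsLocalMin U p :=
          Filter.Eventually.of_forall fun q => by
            rw [h1]; exact (abs_le.mp (hub q)).1
        exact hmin.fderiv_eq_zero
    have hUmem : U p ∈ Set.Icc (-1 : ℝ) 1 := abs_le.mp (hub p)
    have hFd : HasDerivWithinAt F (derivWithin F (Set.Icc (-1) 1) (U p))
        (Set.Icc (-1) 1) (U p) :=
      ((hF.differentiableOn (by norm_num)) (U p) hUmem).hasDerivWithinAt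
    have hUw : HasFDerivWithinAt U (fderiv ℝ U p) Set.univ p := hUp.hasFDerivWithinAt
    have hmt : Set.MapsTo U Set.univ (Set.Icc (-1 : ℝ) 1) :=
      fun q _ => abs_le.mp (hub q)
    have hcomp := hFd.comp_hasFDerivWithinAt p hUw hmt
    rw [hasFDerivWithinAt_univ] at hcomp
    rw [h0] at hcomp ⊢
    simpa [Function.comp_def] using hcomp

lemma hasFDerivAt_fE {F : ℝ → ℝ} {U : ℝ × ℝ → ℝ}
    (hF : ContDiffOn ℝ 2 F (Set.Icc (-1) 1))
    (hU : ContDiff ℝ 3 U)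
    (hub : ∀ p, |U p| ≤ 1) (p : ℝ × ℝ) :
    HasFDerivAt (fun q => F (U q) + 1/2 * (fderiv ℝ U q (0,1))^2 - 1/2 * (fderiv ℝ U q (1,0))^2)
      (deriv F (U p) • fderiv ℝ U p
        + fderiv ℝ U p (0,1) • ((fderiv ℝ (fderiv ℝ U) p).flip (0,1))
        - fderiv ℝ U p (1,0) • ((fderiv ℝ (fderiv ℝ U) p).flip (1,0))) p := by
  have hUdiff : Differentiable ℝ U := hU.differentiable (by norm_num)
  have h1 := hasFDerivAt_FU hF hUdiff hub p
  have hUy := hasFDerivAt_fderiv_apply hU p (0,1)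
  have hUx := hasFDerivAt_fderiv_apply hU p (1,0)
  have h2 : HasFDerivAt (fun q => 1/2 * (fderiv ℝ U q (0,1))^2)
      (fderiv ℝ U p (0,1) • ((fderiv ℝ (fderiv ℝ U) p).flip (0,1))) p := by
    have := (hUy.mul hUy).const_mul (1/2 : ℝ)
    have heq : (fun q => (1:ℝ)/2 * (fderiv ℝ U q (0,1))^2)
        = fun q => 1/2 * (fderiv ℝ U q (0,1) * fderiv ℝ U q (0,1)) := by
      funext q; ring
    rw [heq]
    refine this.congr_fderiv ?_
    refine ContinuousLinearMap.ext fun v => ?_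
    simp only [ContinuousLinearMap.smul_apply, ContinuousLinearMap.add_apply, smul_eq_mul]
    ring
  have h3 : HasFDerivAt (fun q => 1/2 * (fderiv ℝ U q (1,0))^2)
      (fderiv ℝ U p (1,0) • ((fderiv ℝ (fderiv ℝ U) p).flip (1,0))) p := by
    have := (hUx.mul hUx).const_mul (1/2 : ℝ)
    have heq : (fun q => (1:ℝ)/2 * (fderiv ℝ U q (1,0))^2)
        = fun q => 1/2 * (fderiv ℝ U q (1,0) * fderiv ℝ U q (1,0)) := by
      funext q; ring
    rw [heq]
    refine this.congr_fderiv ?_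
    refine ContinuousLinearMap.ext fun v => ?_
    simp only [ContinuousLinearMap.smul_apply, ContinuousLinearMap.add_apply, smul_eq_mul]
    ring
  exact (h1.add h2).sub h3

lemma hasFDerivAt_gE {U : ℝ × ℝ → ℝ} (hU : ContDiff ℝ 3 U) (p : ℝ × ℝ) :
    HasFDerivAt (fun q => -(fderiv ℝ U q (1,0) * fderiv ℝ U q (0,1)))
      (-(fderiv ℝ U p (1,0) • ((fderiv ℝ (fderiv ℝ U) p).flip (0,1))
        + fderiv ℝ U p (0,1) • ((fderiv ℝ (fderiv ℝ U) p).flip (1,0)))) p := by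
  have hUy := hasFDerivAt_fderiv_apply hU p (0,1)
  have hUx := hasFDerivAt_fderiv_apply hU p (1,0)
  exact (hUx.mul hUy).neg

lemma rect_identity {F : ℝ → ℝ} {U : ℝ × ℝ → ℝ}
    (hF : ContDiffOn ℝ 2 F (Set.Icc (-1) 1))
    (hU : ContDiff ℝ 3 U)
    (hub : ∀ p, |U p| ≤ 1)
    (hpde' : ∀ p : ℝ × ℝ, fderiv ℝ (fderiv ℝ U) p (1,0) (1,0)
      + fderiv ℝ (fderiv ℝ U) p (0,1) (0,1) = deriv F (U p))
    (x₁ x₂ R : ℝ) :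
    (∫ y in (-R)..R, (F (U (x₂, y)) + 1/2 * (fderiv ℝ U (x₂,y) (0,1))^2
        - 1/2 * (fderiv ℝ U (x₂,y) (1,0))^2))
      - (∫ y in (-R)..R, (F (U (x₁, y)) + 1/2 * (fderiv ℝ U (x₁,y) (0,1))^2
        - 1/2 * (fderiv ℝ U (x₁,y) (1,0))^2))
    = (∫ x in x₁..x₂, fderiv ℝ U (x, R) (1,0) * fderiv ℝ U (x, R) (0,1))
      - (∫ x in x₁..x₂, fderiv ℝ U (x, -R) (1,0) * fderiv ℝ U (x, -R) (0,1)) := by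
  have hf := hasFDerivAt_fE hF hU hub
  have hg := hasFDerivAt_gE hU
  have hdiv : ∀ p : ℝ × ℝ,
      (deriv F (U p) • fderiv ℝ U p
        + fderiv ℝ U p (0,1) • ((fderiv ℝ (fderiv ℝ U) p).flip (0,1))
        - fderiv ℝ U p (1,0) • ((fderiv ℝ (fderiv ℝ U) p).flip (1,0))) (1,0)
      + (-(fderiv ℝ U p (1,0) • ((fderiv ℝ (fderiv ℝ U) p).flip (0,1))
        + fderiv ℝ U p (0,1) • ((fderiv ℝ (fderiv ℝ U) p).flip (1,0)))) (0,1) = 0 := by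
    intro p
    have h1 := hpde' p
    have h2 : fderiv ℝ (fderiv ℝ U) p (1,0) (0,1) = fderiv ℝ (fderiv ℝ U) p (0,1) (1,0) :=
      (hU.contDiffAt.isSymmSndFDerivAt (by norm_num)) _ _
    simp only [ContinuousLinearMap.add_apply, ContinuousLinearMap.sub_apply,
      ContinuousLinearMap.smul_apply, ContinuousLinearMap.neg_apply,
      ContinuousLinearMap.flip_apply, smul_eq_mul]
    linear_combination (-(fderiv ℝ U p (1,0))) * h1 + (fderiv ℝ U p (0,1)) * h2
  have hfd : Differentiable ℝ (fun q : ℝ × ℝ => F (U q) + 1/2 * (fderiv ℝ U q (0,1))^2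
      - 1/2 * (fderiv ℝ U q (1,0))^2) := fun p => (hf p).differentiableAt
  have hgd : Differentiable ℝ (fun q : ℝ × ℝ => -(fderiv ℝ U q (1,0) * fderiv ℝ U q (0,1))) :=
    fun p => (hg p).differentiableAt
  have hfc := hfd.continuous
  have hgc := hgd.continuous
  have Hi : IntegrableOn (fun p : ℝ × ℝ =>
      (deriv F (U p) • fderiv ℝ U p
        + fderiv ℝ U p (0,1) • ((fderiv ℝ (fderiv ℝ U) p).flip (0,1))
        - fderiv ℝ U p (1,0) • ((fderiv ℝ (fderiv ℝ U) p).flip (1,0))) (1,0)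
      + (-(fderiv ℝ U p (1,0) • ((fderiv ℝ (fderiv ℝ U) p).flip (0,1))
        + fderiv ℝ U p (0,1) • ((fderiv ℝ (fderiv ℝ U) p).flip (1,0)))) (0,1))
      (Set.uIcc x₁ x₂ ×ˢ Set.uIcc (-R) R) := by
    have hz : (fun p : ℝ × ℝ =>
      (deriv F (U p) • fderiv ℝ U p
        + fderiv ℝ U p (0,1) • ((fderiv ℝ (fderiv ℝ U) p).flip (0,1))
        - fderiv ℝ U p (1,0) • ((fderiv ℝ (fderiv ℝ U) p).flip (1,0))) (1,0)
      + (-(fderiv ℝ U p (1,0) • ((fderiv ℝ (fderiv ℝ U) p).flip (0,1))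
        + fderiv ℝ U p (0,1) • ((fderiv ℝ (fderiv ℝ U) p).flip (1,0)))) (0,1))
        = fun _ => (0:ℝ) := funext hdiv
    rw [hz]
    exact integrableOn_zero
  have H := integral2_divergence_prod_of_hasFDerivAt_off_countable
    (fun q : ℝ × ℝ => F (U q) + 1/2 * (fderiv ℝ U q (0,1))^2 - 1/2 * (fderiv ℝ U q (1,0))^2)
    (fun q : ℝ × ℝ => -(fderiv ℝ U q (1,0) * fderiv ℝ U q (0,1)))
    (fun p : ℝ × ℝ => deriv F (U p) • fderiv ℝ U p
        + fderiv ℝ U p (0,1) • ((fderiv ℝ (fderiv ℝ U) p).flip (0,1))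
        - fderiv ℝ U p (1,0) • ((fderiv ℝ (fderiv ℝ U) p).flip (1,0)))
    (fun p : ℝ × ℝ => -(fderiv ℝ U p (1,0) • ((fderiv ℝ (fderiv ℝ U) p).flip (0,1))
        + fderiv ℝ U p (0,1) • ((fderiv ℝ (fderiv ℝ U) p).flip (1,0))))
    x₁ (-R) x₂ R ∅ Set.countable_empty hfc.continuousOn hgc.continuousOn
    (fun q _ => hf q) (fun q _ => hg q) Hi
  simp only [hdiv, intervalIntegral.integral_zero, intervalIntegral.integral_neg] at H
  linarith [H]

lemma integrable_exp_neg_mul_abs {ν : ℝ} (hν : 0 < ν) :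
    Integrable (fun y : ℝ => Real.exp (-ν * |y|)) := by
  have h1 : IntegrableOn (fun y : ℝ => Real.exp (-ν * |y|)) (Set.Ioi 0) := by
    refine ((exp_neg_integrableOn_Ioi 0 hν).congr_fun ?_ measurableSet_Ioi)
    intro y hy
    simp [abs_of_pos (Set.mem_Ioi.mp hy)]
  have h1' : IntegrableOn (fun y : ℝ => Real.exp (-ν * |y|)) (Set.Ici 0) := by
    rwa [integrableOn_Ici_iff_integrableOn_Ioi]
  have h1i : Integrable ((Set.Ici (0:ℝ)).indicator (fun y => Real.exp (-ν * |y|))) :=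
    (integrable_indicator_iff measurableSet_Ici).mpr h1'
  have h2i := h1i.comp_neg
  have heq : (fun x : ℝ => (Set.Ici (0:ℝ)).indicator (fun y => Real.exp (-ν * |y|)) (-x))
      = (Set.Iic (0:ℝ)).indicator (fun y => Real.exp (-ν * |y|)) := by
    funext x
    by_cases hx : x ≤ 0
    · rw [Set.indicator_of_mem (show -x ∈ Set.Ici (0:ℝ) by simpa using hx),
        Set.indicator_of_mem (show x ∈ Set.Iic (0:ℝ) from hx)]
      simp [abs_neg]
    · rw [Set.indicator_of_notMem (show -x ∉ Set.Ici (0:ℝ) by simpa using hx),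
        Set.indicator_of_notMem (show x ∉ Set.Iic (0:ℝ) from hx)]
  rw [heq] at h2i
  have h2 : IntegrableOn (fun y : ℝ => Real.exp (-ν * |y|)) (Set.Iic 0) :=
    (integrable_indicator_iff measurableSet_Iic).mp h2i
  have := h2.union h1
  rwa [Set.Iic_union_Ioi, integrableOn_univ] at this

lemma F_bound {F : ℝ → ℝ} (hF : ContDiffOn ℝ 2 F (Set.Icc (-1) 1))
    (hF1 : F 1 = 0) (hFm1 : F (-1) = 0) :
    ∃ L : ℝ, 0 ≤ L ∧ ∀ t : ℝ, |t| ≤ 1 → |F t| ≤ L * |t ^ 2 - 1| := by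
  have hFdiff : DifferentiableOn ℝ F (Set.Icc (-1) 1) := hF.differentiableOn (by norm_num)
  have hcont : ContinuousOn (fderivWithin ℝ F (Set.Icc (-1) 1)) (Set.Icc (-1) 1) :=
    hF.continuousOn_fderivWithin (uniqueDiffOn_Icc (by norm_num)) (by norm_num)
  obtain ⟨L, hL⟩ := isCompact_Icc.exists_bound_of_continuousOn hcont
  have hL0 : 0 ≤ L :=
    le_trans (norm_nonneg _) (hL (-1) (by norm_num [Set.mem_Icc]))
  refine ⟨L, hL0, ?_⟩
  intro t ht
  have htm : t ∈ Set.Icc (-1:ℝ) 1 := abs_le.mp ht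
  have hmvt : ∀ a ∈ Set.Icc (-1:ℝ) 1, ∀ b ∈ Set.Icc (-1:ℝ) 1, ‖F b - F a‖ ≤ L * ‖b - a‖ :=
    fun a ha b hb =>
      (convex_Icc (-1:ℝ) 1).norm_image_sub_le_of_norm_fderivWithin_le hFdiff hL ha hb
  rcases le_total 0 t with h0 | h0
  · have h1 : |F t| ≤ L * |t - 1| := by
      have := hmvt 1 (by norm_num [Set.mem_Icc]) t htm
      rwa [hF1, sub_zero] at this
    have h2 : |t - 1| ≤ |t ^ 2 - 1| := by
      have e : t ^ 2 - 1 = (t - 1) * (t + 1) := by ring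
      rw [e, abs_mul]
      have h3 : (1:ℝ) ≤ |t + 1| := by
        rw [abs_of_nonneg (by linarith)]; linarith
      nlinarith [abs_nonneg (t - 1)]
    calc |F t| ≤ L * |t - 1| := h1
      _ ≤ L * |t ^ 2 - 1| := mul_le_mul_of_nonneg_left h2 hL0
  · have h1 : |F t| ≤ L * |t + 1| := by
      have := hmvt (-1) (by norm_num [Set.mem_Icc]) t htm
      rwa [hFm1, sub_zero, sub_neg_eq_add] at this
    have h2 : |t + 1| ≤ |t ^ 2 - 1| := by
      have e : t ^ 2 - 1 = (t + 1) * (t - 1) := by ring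
      rw [e, abs_mul]
      have h3 : (1:ℝ) ≤ |t - 1| := by
        rw [abs_of_nonpos (by linarith)]; linarith
      nlinarith [abs_nonneg (t + 1)]
    calc |F t| ≤ L * |t + 1| := h1
      _ ≤ L * |t ^ 2 - 1| := mul_le_mul_of_nonneg_left h2 hL0

set_option maxHeartbeats 1000000 in
lemma main {F : ℝ → ℝ} {U : ℝ × ℝ → ℝ}
    (hF : ContDiffOn ℝ 2 F (Set.Icc (-1) 1))
    (hF1 : F 1 = 0) (hFm1 : F (-1) = 0)
    (hU : ContDiff ℝ 3 U)
    (hub : ∀ p : ℝ × ℝ, |U p| ≤ 1)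
    (hpde' : ∀ p : ℝ × ℝ, fderiv ℝ (fderiv ℝ U) p (1,0) (1,0)
      + fderiv ℝ (fderiv ℝ U) p (0,1) (0,1) = deriv F (U p))
    (hdecay' : ∀ K : ℝ, 0 < K → ∃ C ν : ℝ, 0 < ν ∧ ∀ p : ℝ × ℝ, |p.1| ≤ K →
      |U p ^ 2 - 1| + |fderiv ℝ U p (1,0)| + |fderiv ℝ U p (0,1)| ≤ C * Real.exp (-ν * |p.2|))
    (ρ : ℝ → ℝ)
    (hρ' : ∀ x : ℝ, ρ x = ∫ y : ℝ, (F (U (x, y)) + 1/2 * (fderiv ℝ U (x,y) (0,1))^2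
      - 1/2 * (fderiv ℝ U (x,y) (1,0))^2)) :
    ∀ x₁ x₂ : ℝ, ρ x₁ = ρ x₂ := by
  intro x₁ x₂
  obtain ⟨L, hL0, hFb⟩ := F_bound hF hF1 hFm1
  set K : ℝ := max |x₁| |x₂| + 1 with hKdef
  have hK : 0 < K := by rw [hKdef]; positivity
  obtain ⟨C, ν, hν, hb⟩ := hdecay' K hK
  set C₂ : ℝ := max C 1 with hC₂def
  have hC₂1 : (1:ℝ) ≤ C₂ := le_max_right _ _
  have hC₂0 : (0:ℝ) < C₂ := lt_of_lt_of_le one_pos hC₂1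
  have hb' : ∀ p : ℝ × ℝ, |p.1| ≤ K →
      |U p ^ 2 - 1| ≤ C₂ * Real.exp (-ν * |p.2|)
      ∧ |fderiv ℝ U p (1,0)| ≤ C₂ * Real.exp (-ν * |p.2|)
      ∧ |fderiv ℝ U p (0,1)| ≤ C₂ * Real.exp (-ν * |p.2|) := by
    intro p hp
    have h := hb p hp
    have hCC : C * Real.exp (-ν * |p.2|) ≤ C₂ * Real.exp (-ν * |p.2|) :=
      mul_le_mul_of_nonneg_right (le_max_left _ _) (Real.exp_pos _).le
    have n1 := abs_nonneg (U p ^ 2 - 1)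
    have n2 := abs_nonneg (fderiv ℝ U p (1,0))
    have n3 := abs_nonneg (fderiv ℝ U p (0,1))
    exact ⟨by linarith, by linarith, by linarith⟩
  have hx₁K : |x₁| ≤ K := by
    rw [hKdef]; have := le_max_left |x₁| |x₂|; linarith
  have hx₂K : |x₂| ≤ K := by
    rw [hKdef]; have := le_max_right |x₁| |x₂|; linarith
  -- continuity of the energy density
  have hfd : Differentiable ℝ (fun q : ℝ × ℝ => F (U q) + 1/2 * (fderiv ℝ U q (0,1))^2
      - 1/2 * (fderiv ℝ U q (1,0))^2) := fun p => (hasFDerivAt_fE hF hU hub p).differentiableAt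
  have hfc := hfd.continuous
  -- integrability of the energy density on vertical lines
  have hint : ∀ x : ℝ, |x| ≤ K → Integrable (fun y : ℝ => F (U (x, y))
      + 1/2 * (fderiv ℝ U (x,y) (0,1))^2 - 1/2 * (fderiv ℝ U (x,y) (1,0))^2) := by
    intro x hx
    have hmaj : Integrable (fun y : ℝ => (L * C₂ + C₂ ^ 2) * Real.exp (-ν * |y|)) :=
      (integrable_exp_neg_mul_abs hν).const_mul _
    refine hmaj.mono' ?_ (Filter.Eventually.of_forall ?_)
    · exact (hfc.comp (Continuous.prodMk_right x)).aestronglyMeasurable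
    · intro y
      have hB := hb' (x, y) hx
      have hFU := hFb (U (x, y)) (hub (x, y))
      have hexp1 : Real.exp (-ν * |y|) ≤ 1 := by
        rw [show (1:ℝ) = Real.exp 0 by simp]
        exact Real.exp_le_exp.mpr (by nlinarith [abs_nonneg y])
      have hexp0 : 0 < Real.exp (-ν * |y|) := Real.exp_pos _
      have h1 : |F (U (x, y))| ≤ L * (C₂ * Real.exp (-ν * |y|)) :=
        le_trans hFU (mul_le_mul_of_nonneg_left hB.1 hL0)
      have hsq : (C₂ * Real.exp (-ν * |y|)) * (C₂ * Real.exp (-ν * |y|))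
          ≤ C₂^2 * Real.exp (-ν * |y|) := by
        nlinarith [mul_nonneg (mul_nonneg hC₂0.le hC₂0.le) hexp0.le, hexp1]
      have hep : (0:ℝ) ≤ C₂ * Real.exp (-ν * |y|) := by positivity
      have h2 : (fderiv ℝ U (x,y) (0,1))^2 ≤ C₂^2 * Real.exp (-ν * |y|) := by
        have hbb := mul_le_mul hB.2.2 hB.2.2 (abs_nonneg _) hep
        calc (fderiv ℝ U (x,y) (0,1))^2
            = |fderiv ℝ U (x,y) (0,1)| * |fderiv ℝ U (x,y) (0,1)| := by
              rw [sq, ← abs_mul_abs_self]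
          _ ≤ (C₂ * Real.exp (-ν * |y|)) * (C₂ * Real.exp (-ν * |y|)) := hbb
          _ ≤ C₂^2 * Real.exp (-ν * |y|) := hsq
      have h3 : (fderiv ℝ U (x,y) (1,0))^2 ≤ C₂^2 * Real.exp (-ν * |y|) := by
        have hbb := mul_le_mul hB.2.1 hB.2.1 (abs_nonneg _) hep
        calc (fderiv ℝ U (x,y) (1,0))^2
            = |fderiv ℝ U (x,y) (1,0)| * |fderiv ℝ U (x,y) (1,0)| := by
              rw [sq, ← abs_mul_abs_self]
          _ ≤ (C₂ * Real.exp (-ν * |y|)) * (C₂ * Real.exp (-ν * |y|)) := hbb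
          _ ≤ C₂^2 * Real.exp (-ν * |y|) := hsq
      rw [Real.norm_eq_abs]
      have hn1 := neg_abs_le (F (U (x, y)))
      have hn2 := le_abs_self (F (U (x, y)))
      have hs1 := sq_nonneg (fderiv ℝ U (x,y) (0,1))
      have hs2 := sq_nonneg (fderiv ℝ U (x,y) (1,0))
      refine abs_le.mpr ⟨by linarith [h1, h2, h3, hn1, hn2, hs1, hs2],
        by linarith [h1, h2, h3, hn1, hn2, hs1, hs2]⟩
  -- convergence of truncated integrals to ρ
  have htend : ∀ x : ℝ, |x| ≤ K → Filter.Tendsto (fun R : ℝ => ∫ y in (-R)..R,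
      (F (U (x, y)) + 1/2 * (fderiv ℝ U (x,y) (0,1))^2 - 1/2 * (fderiv ℝ U (x,y) (1,0))^2))
      Filter.atTop (nhds (ρ x)) := by
    intro x hx
    rw [hρ' x]
    exact intervalIntegral_tendsto_integral (hint x hx) tendsto_neg_atTop_atBot tendsto_id
  have hdiff : Filter.Tendsto (fun R : ℝ =>
      (∫ y in (-R)..R, (F (U (x₂, y)) + 1/2 * (fderiv ℝ U (x₂,y) (0,1))^2
        - 1/2 * (fderiv ℝ U (x₂,y) (1,0))^2))
      - (∫ y in (-R)..R, (F (U (x₁, y)) + 1/2 * (fderiv ℝ U (x₁,y) (0,1))^2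
        - 1/2 * (fderiv ℝ U (x₁,y) (1,0))^2))) Filter.atTop (nhds (ρ x₂ - ρ x₁)) :=
    (htend x₂ hx₂K).sub (htend x₁ hx₁K)
  have key : ∀ R : ℝ,
      (∫ y in (-R)..R, (F (U (x₂, y)) + 1/2 * (fderiv ℝ U (x₂,y) (0,1))^2
        - 1/2 * (fderiv ℝ U (x₂,y) (1,0))^2))
      - (∫ y in (-R)..R, (F (U (x₁, y)) + 1/2 * (fderiv ℝ U (x₁,y) (0,1))^2
        - 1/2 * (fderiv ℝ U (x₁,y) (1,0))^2))
      = (∫ x in x₁..x₂, fderiv ℝ U (x, R) (1,0) * fderiv ℝ U (x, R) (0,1))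
        - (∫ x in x₁..x₂, fderiv ℝ U (x, -R) (1,0) * fderiv ℝ U (x, -R) (0,1)) :=
    fun R => rect_identity hF hU hub hpde' x₁ x₂ R
  -- the boundary term tends to zero
  have hflux : ∀ R : ℝ, 0 ≤ R → ∀ s : ℝ, |s| = R →
      ‖∫ x in x₁..x₂, fderiv ℝ U (x, s) (1,0) * fderiv ℝ U (x, s) (0,1)‖
        ≤ (C₂ * Real.exp (-ν * R))^2 * |x₂ - x₁| := by
    intro R hR s hs
    refine intervalIntegral.norm_integral_le_of_norm_le_const ?_
    intro x hx
    have hxK : |x| ≤ K := by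
      have hx' : x ∈ Set.uIcc x₁ x₂ := Set.uIoc_subset_uIcc hx
      rcases Set.mem_uIcc.mp hx' with ⟨ha, hb2⟩ | ⟨ha, hb2⟩
      · have := abs_le_max_abs_abs ha hb2
        rw [hKdef]; rcases max_cases |x₁| |x₂| with ⟨hm, _⟩ | ⟨hm, _⟩ <;> rw [hm] at this <;>
          [have := le_max_left |x₁| |x₂|; have := le_max_right |x₁| |x₂|] <;> linarith
      · have := abs_le_max_abs_abs ha hb2
        rw [hKdef]; rcases max_cases |x₂| |x₁| with ⟨hm, _⟩ | ⟨hm, _⟩ <;> rw [hm] at this <;>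
          [have := le_max_right |x₁| |x₂|; have := le_max_left |x₁| |x₂|] <;> linarith
    have hB := hb' (x, s) hxK
    have h1 : |fderiv ℝ U (x,s) (1,0)| ≤ C₂ * Real.exp (-ν * R) := by
      have := hB.2.1; rwa [show |(x, s).2| = R from hs] at this
    have h2 : |fderiv ℝ U (x,s) (0,1)| ≤ C₂ * Real.exp (-ν * R) := by
      have := hB.2.2; rwa [show |(x, s).2| = R from hs] at this
    rw [Real.norm_eq_abs, abs_mul]
    have hep : (0:ℝ) ≤ C₂ * Real.exp (-ν * R) := by positivity
    calc |fderiv ℝ U (x,s) (1,0)| * |fderiv ℝ U (x,s) (0,1)|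
        ≤ (C₂ * Real.exp (-ν * R)) * (C₂ * Real.exp (-ν * R)) :=
          mul_le_mul h1 h2 (abs_nonneg _) hep
      _ = (C₂ * Real.exp (-ν * R))^2 := by ring
  have hzero : Filter.Tendsto (fun R : ℝ =>
      (∫ x in x₁..x₂, fderiv ℝ U (x, R) (1,0) * fderiv ℝ U (x, R) (0,1))
        - (∫ x in x₁..x₂, fderiv ℝ U (x, -R) (1,0) * fderiv ℝ U (x, -R) (0,1)))
      Filter.atTop (nhds 0) := by
    have hbnd : Filter.Tendsto (fun R : ℝ => 2 * ((C₂ * Real.exp (-ν * R))^2 * |x₂ - x₁|))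
        Filter.atTop (nhds 0) := by
      have hterm : Filter.Tendsto (fun R : ℝ => Real.exp (-ν * R)) Filter.atTop (nhds 0) := by
        have h1 : Filter.Tendsto (fun R : ℝ => ν * R) Filter.atTop Filter.atTop :=
          Filter.Tendsto.const_mul_atTop hν Filter.tendsto_id
        have h2 := Real.tendsto_exp_neg_atTop_nhds_zero.comp h1
        have h3 : (fun R : ℝ => Real.exp (-ν * R)) = (fun x : ℝ => Real.exp (-x)) ∘ fun R : ℝ => ν * R := by
          funext R; simp [Function.comp, neg_mul]
        rw [h3]; exact h2
      have h4 : Filter.Tendsto (fun R : ℝ => 2 * ((C₂ * Real.exp (-ν * R))^2 * |x₂ - x₁|))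
          Filter.atTop (nhds (2 * ((C₂ * 0)^2 * |x₂ - x₁|))) :=
        (((hterm.const_mul C₂).pow 2).mul_const _).const_mul _
      simpa using h4
    refine squeeze_zero_norm' ?_ hbnd
    filter_upwards [Filter.eventually_ge_atTop (0:ℝ)] with R hR
    have hI1 := hflux R hR R (abs_of_nonneg hR)
    have hI2 := hflux R hR (-R) (by rw [abs_neg, abs_of_nonneg hR])
    calc ‖(∫ x in x₁..x₂, fderiv ℝ U (x, R) (1,0) * fderiv ℝ U (x, R) (0,1))
        - (∫ x in x₁..x₂, fderiv ℝ U (x, -R) (1,0) * fderiv ℝ U (x, -R) (0,1))‖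
        ≤ ‖∫ x in x₁..x₂, fderiv ℝ U (x, R) (1,0) * fderiv ℝ U (x, R) (0,1)‖
          + ‖∫ x in x₁..x₂, fderiv ℝ U (x, -R) (1,0) * fderiv ℝ U (x, -R) (0,1)‖ :=
          norm_sub_le _ _
      _ ≤ 2 * ((C₂ * Real.exp (-ν * R))^2 * |x₂ - x₁|) := by linarith
  have hEq : (fun R : ℝ =>
      (∫ y in (-R)..R, (F (U (x₂, y)) + 1/2 * (fderiv ℝ U (x₂,y) (0,1))^2
        - 1/2 * (fderiv ℝ U (x₂,y) (1,0))^2))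
      - (∫ y in (-R)..R, (F (U (x₁, y)) + 1/2 * (fderiv ℝ U (x₁,y) (0,1))^2
        - 1/2 * (fderiv ℝ U (x₁,y) (1,0))^2)))
      = fun R : ℝ =>
      (∫ x in x₁..x₂, fderiv ℝ U (x, R) (1,0) * fderiv ℝ U (x, R) (0,1))
        - (∫ x in x₁..x₂, fderiv ℝ U (x, -R) (1,0) * fderiv ℝ U (x, -R) (0,1)) :=
    funext key
  rw [hEq] at hdiff
  have := tendsto_nhds_unique hdiff hzero
  linarith

end Stmt6Aux

/-- Hamiltonian identity: `ρ(x)` is independent of `x`. -/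
theorem stmt_6
    (F : ℝ → ℝ) (u : ℝ → ℝ → ℝ)
    (hF : ContDiffOn ℝ 2 F (Set.Icc (-1) 1))
    (hF1 : F 1 = 0) (hFm1 : F (-1) = 0)
    (hu : ContDiff ℝ 3 (fun p : ℝ × ℝ => u p.1 p.2))
    (hub : ∀ x y : ℝ, |u x y| ≤ 1)
    (hpde : ∀ x y : ℝ,
      deriv (deriv (fun t => u t y)) x + deriv (deriv (u x)) y = deriv F (u x y))
    (hlimtop : ∀ x : ℝ, Filter.Tendsto (fun y => u x y) Filter.atTop (nhds 1))
    (hlimbot : ∀ x : ℝ, Filter.Tendsto (fun y => u x y) Filter.atBot (nhds (-1)))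
    (hdecay : ∀ K : ℝ, 0 < K → ∃ C ν : ℝ, 0 < ν ∧ ∀ x y : ℝ, |x| ≤ K →
      |(u x y) ^ 2 - 1| + |deriv (fun t => u t y) x| + |deriv (u x) y|
        ≤ C * Real.exp (-ν * |y|))
    (ρ : ℝ → ℝ)
    (hρ : ∀ x : ℝ, ρ x = ∫ y : ℝ,
      (F (u x y) + (1 / 2) * (deriv (u x) y) ^ 2
        - (1 / 2) * (deriv (fun t => u t y) x) ^ 2)) :
    ∀ x₁ x₂ : ℝ, ρ x₁ = ρ x₂ := by
  have hUdiff : Differentiable ℝ (fun p : ℝ × ℝ => u p.1 p.2) := hu.differentiable (by norm_num)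
  have hub' : ∀ p : ℝ × ℝ, |(fun p : ℝ × ℝ => u p.1 p.2) p| ≤ 1 := fun p => hub p.1 p.2
  have hUx : ∀ x y : ℝ, deriv (fun t => u t y) x
      = fderiv ℝ (fun p : ℝ × ℝ => u p.1 p.2) (x, y) (1, 0) := fun x y =>
    (Stmt6Aux.pd_fst ((hUdiff (x, y)).hasFDerivAt)).deriv
  have hUy : ∀ x y : ℝ, deriv (u x) y
      = fderiv ℝ (fun p : ℝ × ℝ => u p.1 p.2) (x, y) (0, 1) := fun x y =>
    (Stmt6Aux.pd_snd ((hUdiff (x, y)).hasFDerivAt)).deriv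
  have hpde' : ∀ p : ℝ × ℝ, fderiv ℝ (fderiv ℝ (fun p : ℝ × ℝ => u p.1 p.2)) p (1,0) (1,0)
      + fderiv ℝ (fderiv ℝ (fun p : ℝ × ℝ => u p.1 p.2)) p (0,1) (0,1)
      = deriv F ((fun p : ℝ × ℝ => u p.1 p.2) p) := by
    rintro ⟨x, y⟩
    have e1 : deriv (fun t => u t y)
        = fun t => fderiv ℝ (fun p : ℝ × ℝ => u p.1 p.2) (t, y) (1, 0) :=
      funext fun t => hUx t y
    have d1 : HasDerivAt (fun t => fderiv ℝ (fun p : ℝ × ℝ => u p.1 p.2) (t, y) (1, 0))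
        (fderiv ℝ (fderiv ℝ (fun p : ℝ × ℝ => u p.1 p.2)) (x, y) (1,0) (1,0)) x := by
      simpa using Stmt6Aux.pd_fst (Stmt6Aux.hasFDerivAt_fderiv_apply hu (x, y) (1, 0))
    have e2 : deriv (u x)
        = fun s => fderiv ℝ (fun p : ℝ × ℝ => u p.1 p.2) (x, s) (0, 1) :=
      funext fun s => hUy x s
    have d2 : HasDerivAt (fun s => fderiv ℝ (fun p : ℝ × ℝ => u p.1 p.2) (x, s) (0, 1))
        (fderiv ℝ (fderiv ℝ (fun p : ℝ × ℝ => u p.1 p.2)) (x, y) (0,1) (0,1)) y := by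
      simpa using Stmt6Aux.pd_snd (Stmt6Aux.hasFDerivAt_fderiv_apply hu (x, y) (0, 1))
    have h := hpde x y
    rw [e1, d1.deriv, e2, d2.deriv] at h
    exact h
  have hdecay' : ∀ K : ℝ, 0 < K → ∃ C ν : ℝ, 0 < ν ∧ ∀ p : ℝ × ℝ, |p.1| ≤ K →
      |(fun p : ℝ × ℝ => u p.1 p.2) p ^ 2 - 1|
      + |fderiv ℝ (fun p : ℝ × ℝ => u p.1 p.2) p (1,0)|
      + |fderiv ℝ (fun p : ℝ × ℝ => u p.1 p.2) p (0,1)| ≤ C * Real.exp (-ν * |p.2|) := by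
    intro K hK
    obtain ⟨C, ν, hν, hb⟩ := hdecay K hK
    refine ⟨C, ν, hν, ?_⟩
    rintro ⟨x, y⟩ hp
    have h := hb x y hp
    rw [hUx x y, hUy x y] at h
    exact h
  have hρ' : ∀ x : ℝ, ρ x = ∫ y : ℝ, (F ((fun p : ℝ × ℝ => u p.1 p.2) (x, y))
      + 1/2 * (fderiv ℝ (fun p : ℝ × ℝ => u p.1 p.2) (x,y) (0,1))^2
      - 1/2 * (fderiv ℝ (fun p : ℝ × ℝ => u p.1 p.2) (x,y) (1,0))^2) := by
    intro x
    rw [hρ x]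
    congr 1
    funext y
    rw [hUx x y, hUy x y]
  exact Stmt6Aux.main hF hF1 hFm1 hu hub' hpde' hdecay' ρ hρ'
end

section
/- Suppose 0 < θ₁ < θ₂ < θ₃ < θ₄ < 2π with 0 < θ₁ < π/2, θ₄ = 2π − θ₁, and the two balance equations cos θ₁ + cos θ₄ = −cos θ₂ − cos θ₃ and sin θ₁ + sin θ₂ = −sin θ₃ − sin θ₄ hold, together with θ₂, θ₃ ∈ (π/2, 3π/2) \ {π}. Then θ₂ = π − θ₁ and θ₃ = π + θ₁. -/
open Real

/-- Balance relations force the four ends to be symmetric: `θ₂ = π - θ₁`, `θ₃ = π + θ₁`. -/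
theorem stmt_10
    (θ₁ θ₂ θ₃ θ₄ : ℝ)
    (h12 : θ₁ < θ₂) (h23 : θ₂ < θ₃) (h34 : θ₃ < θ₄) (h4 : θ₄ < 2 * Real.pi)
    (h1 : 0 < θ₁) (h1' : θ₁ < Real.pi / 2)
    (h4' : θ₄ = 2 * Real.pi - θ₁)
    (h2range : θ₂ ∈ Set.Ioo (Real.pi / 2) (3 * Real.pi / 2)) (h2 : θ₂ ≠ Real.pi)
    (h3range : θ₃ ∈ Set.Ioo (Real.pi / 2) (3 * Real.pi / 2)) (h3 : θ₃ ≠ Real.pi)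
    (hbal1 : Real.cos θ₁ + Real.cos θ₄ = -Real.cos θ₂ - Real.cos θ₃)
    (hbal2 : Real.sin θ₁ + Real.sin θ₂ = -Real.sin θ₃ - Real.sin θ₄) :
    θ₂ = Real.pi - θ₁ ∧ θ₃ = Real.pi + θ₁ := by
  obtain ⟨h2l, h2r⟩ := h2range
  obtain ⟨h3l, h3r⟩ := h3range
  have hpi := Real.pi_pos
  have hs4 : Real.sin θ₄ = -Real.sin θ₁ := by
    rw [h4', Real.sin_sub]; simp [Real.sin_two_pi, Real.cos_two_pi]
  have hc4 : Real.cos θ₄ = Real.cos θ₁ := by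
    rw [h4', Real.cos_sub]; simp [Real.sin_two_pi, Real.cos_two_pi]
  have hs : Real.sin θ₂ + Real.sin θ₃ = 0 := by rw [hs4] at hbal2; linarith
  have hc : Real.cos θ₂ + Real.cos θ₃ = -2 * Real.cos θ₁ := by
    rw [hc4] at hbal1; linarith
  have hsum : θ₂ + θ₃ = 2 * Real.pi := by
    have heq : Real.sin (θ₂ - Real.pi) = Real.sin (Real.pi - θ₃) := by
      have a : Real.sin (θ₂ - Real.pi) = -Real.sin θ₂ := by
        rw [Real.sin_sub]; simp
      have b : Real.sin (Real.pi - θ₃) = Real.sin θ₃ := Real.sin_pi_sub θ₃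
      rw [a, b]; linarith
    have h' := Real.injOn_sin
      ⟨by linarith, by linarith⟩ ⟨by linarith, by linarith⟩ heq
    linarith
  have h2ltpi : θ₂ < Real.pi := by linarith
  have hc3 : Real.cos θ₃ = Real.cos θ₂ := by
    have : θ₃ = 2 * Real.pi - θ₂ := by linarith
    rw [this, Real.cos_sub]; simp [Real.sin_two_pi, Real.cos_two_pi]
  have hceq : Real.cos θ₂ = Real.cos (Real.pi - θ₁) := by
    rw [Real.cos_pi_sub]; rw [hc3] at hc; linarith
  have h2eq : θ₂ = Real.pi - θ₁ :=
    Real.injOn_cos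
      ⟨by linarith, by linarith⟩ ⟨by linarith, by linarith⟩ hceq
  exact ⟨h2eq, by linarith⟩
end
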